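/- arXiv:2305.01942 — 9 statements merged into one kernel-verified Lean document; each statement's English description precedes it below -/
import Mathlib

section
/- Let p ≥ 1 be an integer, Y a d×d real positive definite matrix, and v ∈ ℝ^d a vector with vᵀY⁻¹v < 1. Then Y − vvᵀ is positive definite and tr((Y − vvᵀ)^{−p}) ≤ tr(Y^{−p}) + Σ_{i=1}^{p} C(p,i) · (vᵀY⁻¹v)^{i−1} · (vᵀY^{−p−1}v) / (1 − vᵀY⁻¹v)^i. -/
open Matrix BigOperators
open scoped MatrixOrder

variable {d : ℕ}

private lemma trace_mul_vvT (M : Matrix (Fin d) (Fin d) ℝ) (a b : Fin d → ℝ) :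
    (M * vecMulVec a b).trace = b ⬝ᵥ M *ᵥ a := by
  unfold Matrix.trace dotProduct mulVec
  simp only [Matrix.diag, Matrix.mul_apply, vecMulVec_apply, dotProduct, Finset.mul_sum]
  exact Finset.sum_congr rfl fun i _ => Finset.sum_congr rfl fun j _ => by ring

private lemma vvT_mul (M : Matrix (Fin d) (Fin d) ℝ) (a b : Fin d → ℝ) :
    vecMulVec a b * M = vecMulVec a (Mᵀ *ᵥ b) := by
  ext i j
  simp only [Matrix.mul_apply, vecMulVec_apply, mulVec, dotProduct, Matrix.transpose_apply,
    Finset.mul_sum]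
  exact Finset.sum_congr rfl fun k _ => by ring

private lemma mul_vvT (M : Matrix (Fin d) (Fin d) ℝ) (a b : Fin d → ℝ) :
    M * vecMulVec a b = vecMulVec (M *ᵥ a) b := by
  ext i j
  simp only [Matrix.mul_apply, vecMulVec_apply, mulVec, dotProduct, Finset.sum_mul]
  exact Finset.sum_congr rfl fun k _ => by ring

private lemma vvT_mul_vvT (a b c e : Fin d → ℝ) :
    vecMulVec a b * vecMulVec c e = (b ⬝ᵥ c) • vecMulVec a e := by
  ext i j
  simp only [Matrix.mul_apply, vecMulVec_apply, dotProduct, Matrix.smul_apply, Finset.sum_mul,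
    smul_eq_mul, Finset.mul_sum]
  exact Finset.sum_congr rfl fun k _ => by ring

private lemma dot_vvT (x y a b : Fin d → ℝ) :
    x ⬝ᵥ (vecMulVec a b) *ᵥ y = (x ⬝ᵥ a) * (b ⬝ᵥ y) := by
  unfold dotProduct mulVec vecMulVec
  simp only [Matrix.of_apply, dotProduct, Finset.sum_mul, Finset.mul_sum]
  rw [Finset.sum_comm]
  exact Finset.sum_congr rfl fun i _ => Finset.sum_congr rfl fun j _ => by ring

-- shift a symmetric matrix across the dot product
private lemma dot_shift {P : Matrix (Fin d) (Fin d) ℝ} (hP : Pᵀ = P)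
    (N : Matrix (Fin d) (Fin d) ℝ) (x y : Fin d → ℝ) :
    (P *ᵥ x) ⬝ᵥ N *ᵥ y = x ⬝ᵥ (P * N) *ᵥ y := by
  rw [dotProduct_mulVec, ← Matrix.vecMul_transpose, hP, Matrix.vecMul_vecMul,
    ← dotProduct_mulVec]

private lemma dot_pow_split {P : Matrix (Fin d) (Fin d) ℝ} (hP : Pᵀ = P)
    (x : Fin d → ℝ) (a b : ℕ) :
    x ⬝ᵥ (P ^ (a + b)) *ᵥ x = (P ^ a *ᵥ x) ⬝ᵥ (P ^ b *ᵥ x) := by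
  have hPa : (P ^ a)ᵀ = P ^ a := by rw [Matrix.transpose_pow, hP]
  rw [dot_shift hPa, ← pow_add]

private lemma dot_cs {P : Matrix (Fin d) (Fin d) ℝ} (hP : Pᵀ = P)
    (x : Fin d → ℝ) (a b : ℕ) :
    (x ⬝ᵥ (P ^ (a + b)) *ᵥ x) ^ 2 ≤ (x ⬝ᵥ (P ^ (a + a)) *ᵥ x) * (x ⬝ᵥ (P ^ (b + b)) *ᵥ x) := by
  rw [dot_pow_split hP x a b, dot_pow_split hP x a a, dot_pow_split hP x b b]
  have := Finset.sum_mul_sq_le_sq_mul_sq Finset.univ (fun i => (P ^ a *ᵥ x) i)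
    (fun i => (P ^ b *ᵥ x) i)
  simpa [dotProduct, sq] using this

private lemma dot_cs' (a b : Fin d → ℝ) : (a ⬝ᵥ b) ^ 2 ≤ (a ⬝ᵥ a) * (b ⬝ᵥ b) := by
  have := Finset.sum_mul_sq_le_sq_mul_sq Finset.univ (fun i => a i) (fun i => b i)
  simpa [dotProduct, sq] using this

private lemma f_pos {A : Matrix (Fin d) (Fin d) ℝ} (hA : A.PosDef)
    {v : Fin d → ℝ} (hv : v ≠ 0) (j : ℕ) : 0 < v ⬝ᵥ (A ^ j) *ᵥ v := by
  have hAt : Aᵀ = A := by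
    rw [← Matrix.conjTranspose_eq_transpose_of_trivial]; exact hA.isHermitian
  have hunit : ∀ a : ℕ, IsUnit (A ^ a).det := by
    intro a
    rw [Matrix.det_pow]
    exact (isUnit_iff_ne_zero.mpr (pow_ne_zero a hA.det_pos.ne'))
  have hne : ∀ a : ℕ, A ^ a *ᵥ v ≠ 0 := by
    intro a h
    apply hv
    have := congrArg (fun z => (A ^ a)⁻¹ *ᵥ z) h
    simpa [Matrix.mulVec_mulVec, Matrix.nonsing_inv_mul _ (hunit a)] using this
  have hsq : ∀ x : Fin d → ℝ, x ≠ 0 → 0 < x ⬝ᵥ x := by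
    intro x hx
    rcases (lt_or_eq_of_le (Finset.sum_nonneg fun i _ => mul_self_nonneg (x i)) : _) with h | h
    · exact h
    · exact absurd (dotProduct_self_eq_zero.mp h.symm) hx
  rcases Nat.even_or_odd j with ⟨a, ha⟩ | ⟨a, ha⟩
  · subst ha
    rw [dot_pow_split hAt]
    exact hsq _ (hne a)
  · subst ha
    have : A ^ (2 * a + 1) = A ^ a * (A * A ^ a) := by
      rw [show 2 * a + 1 = a + (a + 1) by omega, pow_add, pow_succ']
    rw [this, ← dot_shift (by rw [Matrix.transpose_pow, hAt]) (A * A ^ a) v v,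
      ← Matrix.mulVec_mulVec]
    have := hA.dotProduct_mulVec_pos (hne a)
    simpa using this

private lemma f_logconvex {A : Matrix (Fin d) (Fin d) ℝ} (hA : A.PosDef)
    (v : Fin d → ℝ) (k : ℕ) :
    (v ⬝ᵥ (A ^ (k + 1)) *ᵥ v) ^ 2 ≤
      (v ⬝ᵥ (A ^ k) *ᵥ v) * (v ⬝ᵥ (A ^ (k + 2)) *ᵥ v) := by
  have hAt : Aᵀ = A := by
    rw [← Matrix.conjTranspose_eq_transpose_of_trivial]; exact hA.isHermitian
  rcases Nat.even_or_odd k with ⟨a, ha⟩ | ⟨a, ha⟩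
  · -- k = a + a : direct Cauchy-Schwarz on v
    subst ha
    have := dot_cs hAt v a (a + 1)
    have e1 : a + (a + 1) = a + a + 1 := by omega
    have e2 : a + 1 + (a + 1) = a + a + 2 := by omega
    rwa [e1, e2] at this
  · -- k = 2a + 1 : Cauchy-Schwarz on u = sqrt A *ᵥ v
    have hS := (CFC.sqrt_nonneg A).posSemidef
    set S := CFC.sqrt A with hSdef
    have hSS : S * S = A := CFC.sqrt_mul_sqrt_self A hA.posSemidef.nonneg
    have hSt : Sᵀ = S := by
      rw [← Matrix.conjTranspose_eq_transpose_of_trivial]; exact hS.isHermitian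
    have hcomm : Commute S A := by
      unfold Commute SemiconjBy
      rw [← hSS, mul_assoc]
    set u := S *ᵥ v with hu
    have hfu : ∀ j : ℕ, v ⬝ᵥ (A ^ (j + 1)) *ᵥ v = u ⬝ᵥ (A ^ j) *ᵥ u := by
      intro j
      have h1 : A ^ (j + 1) = S * (A ^ j * S) := by
        rw [← mul_assoc, (hcomm.pow_right j).eq, mul_assoc, hSS, ← pow_succ]
      rw [h1, ← dot_shift hSt, ← Matrix.mulVec_mulVec]
    subst ha
    have h1 : 2 * a + 1 + 1 = (a + (a + 1)) + 1 := by omega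
    have h2 : 2 * a + 1 = (a + a) + 1 := by omega
    have h3 : 2 * a + 1 + 2 = (a + 1 + (a + 1)) + 1 := by omega
    rw [h3, h1, h2, hfu, hfu, hfu]
    exact dot_cs hAt u a (a + 1)

private lemma f_chain {A : Matrix (Fin d) (Fin d) ℝ} (hA : A.PosDef)
    (v : Fin d → ℝ) (x y : ℕ) :
    (v ⬝ᵥ (A ^ (x + 1)) *ᵥ v) * (v ⬝ᵥ (A ^ (y + 1)) *ᵥ v) ≤
      (v ⬝ᵥ (A ^ 1) *ᵥ v) * (v ⬝ᵥ (A ^ (x + y + 1)) *ᵥ v) := by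
  rcases eq_or_ne v 0 with rfl | hv
  · simp
  set f : ℕ → ℝ := fun j => v ⬝ᵥ (A ^ j) *ᵥ v with hf
  have hpos : ∀ j, 0 < f j := f_pos hA hv
  have hlog : ∀ k : ℕ, f (k + 1) ^ 2 ≤ f k * f (k + 2) := f_logconvex hA v
  -- ratio monotonicity
  have hratio : ∀ j k : ℕ, j ≤ k → f (j + 1) * f k ≤ f j * f (k + 1) := by
    intro j k hjk
    induction k, hjk using Nat.le_induction with
    | base => rw [mul_comm]
    | succ k hjk ih =>
      have h1 : f (k + 1) ^ 2 ≤ f k * f (k + 2) := hlog k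
      have h2 : 0 < f j := hpos j
      have h3 : 0 < f k := hpos k
      have h4 : 0 < f (j + 1) := hpos (j + 1)
      have h5 : 0 < f (k + 1) := hpos (k + 1)
      nlinarith [mul_pos h2 h3, mul_pos h4 h5]
  -- chain
  induction y with
  | zero => rw [mul_comm]
  | succ y ih =>
    have hr : f (y + 2) * f (x + y + 1) ≤ f (y + 1) * f (x + y + 2) := by
      have := hratio (y + 1) (x + y + 1) (by omega)
      rwa [show y + 1 + 1 = y + 2 from rfl, show x + y + 1 + 1 = x + y + 2 from rfl] at this
    have key : f (x + 1) * f (y + 2) * f (y + 1) ≤ f 1 * f (x + y + 2) * f (y + 1) := by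
      calc f (x + 1) * f (y + 2) * f (y + 1)
          = f (x + 1) * f (y + 1) * f (y + 2) := by ring
        _ ≤ f 1 * f (x + y + 1) * f (y + 2) :=
            mul_le_mul_of_nonneg_right ih (hpos (y + 2)).le
        _ = f 1 * (f (y + 2) * f (x + y + 1)) := by ring
        _ ≤ f 1 * (f (y + 1) * f (x + y + 2)) :=
            mul_le_mul_of_nonneg_left hr (hpos 1).le
        _ = f 1 * f (x + y + 2) * f (y + 1) := by ring
    exact le_of_mul_le_mul_right key (hpos (y + 1))

private lemma telescope (B A : Matrix (Fin d) (Fin d) ℝ) : ∀ n : ℕ,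
    B ^ n - A ^ n = ∑ k ∈ Finset.range n, B ^ k * (B - A) * A ^ (n - 1 - k) := by
  intro n
  induction n with
  | zero => simp
  | succ n ih =>
    have hsplit := Finset.sum_range_succ'
      (fun k => B ^ k * (B - A) * A ^ (n + 1 - 1 - k)) n
    simp only [Nat.add_sub_cancel] at hsplit ⊢
    rw [hsplit]
    have hterm : ∀ k, B ^ (k + 1) * (B - A) * A ^ (n - (k + 1)) =
        B * (B ^ k * (B - A) * A ^ (n - 1 - k)) := by
      intro k
      rw [show n - (k + 1) = n - 1 - k by omega, pow_succ']
      noncomm_ring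
    simp only [hterm]
    rw [← Finset.mul_sum, ← ih]
    rw [pow_zero, one_mul, Nat.sub_zero]
    rw [mul_sub, sub_mul, ← pow_succ', ← pow_succ']
    abel

private lemma binom_id (s : ℝ) (h0 : 0 ≤ s) (h1 : s < 1) (p : ℕ) (hp : 1 ≤ p) :
    ∑ k ∈ Finset.range p, ((1 - s)⁻¹) ^ (k + 1) =
      ∑ i ∈ Finset.Icc 1 p, (p.choose i : ℝ) * s ^ (i - 1) * ((1 - s)⁻¹) ^ i := by
  have hs1 : (1 : ℝ) - s ≠ 0 := by linarith
  set c : ℝ := (1 - s)⁻¹ with hc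
  have hcs : (1 - s) * c = 1 := mul_inv_cancel₀ hs1
  have hc1 : 1 + s * c = c := by
    linear_combination (-1 : ℝ) * hcs
  rcases eq_or_ne s 0 with rfl | hs
  · simp only [hc, sub_zero, inv_one, one_pow, Finset.sum_const, Finset.card_range,
      nsmul_eq_mul, mul_one]
    rw [Finset.sum_eq_single_of_mem 1 (Finset.mem_Icc.mpr ⟨le_refl 1, hp⟩)]
    · simp
    · intro i hi hne
      have : i - 1 ≠ 0 := by
        rcases Finset.mem_Icc.mp hi with ⟨h1', h2'⟩; omega
      simp [zero_pow this]
  · have hs0 : 0 < s := lt_of_le_of_ne h0 (Ne.symm hs)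
    apply mul_left_cancel₀ hs
    rw [Finset.mul_sum, Finset.mul_sum]
    have hL : ∑ k ∈ Finset.range p, s * c ^ (k + 1) = c ^ p - 1 := by
      have hgeom : (∑ k ∈ Finset.range p, c ^ k) * (c - 1) = c ^ p - 1 := geom_sum_mul c p
      calc ∑ k ∈ Finset.range p, s * c ^ (k + 1)
          = (∑ k ∈ Finset.range p, c ^ k) * (s * c) := by
            rw [Finset.sum_mul]
            exact Finset.sum_congr rfl fun k _ => by rw [pow_succ]; ring
        _ = (∑ k ∈ Finset.range p, c ^ k) * (c - 1) := by
            rw [show s * c = c - 1 by linarith [hc1]]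
        _ = c ^ p - 1 := hgeom
    have hR : ∑ i ∈ Finset.Icc 1 p, s * ((p.choose i : ℝ) * s ^ (i - 1) * c ^ i) = c ^ p - 1 := by
      have hterm : ∀ i ∈ Finset.Icc 1 p,
          s * ((p.choose i : ℝ) * s ^ (i - 1) * c ^ i) = (p.choose i : ℝ) * (s * c) ^ i := by
        intro i hi
        rcases Finset.mem_Icc.mp hi with ⟨h1', h2'⟩
        calc s * ((p.choose i : ℝ) * s ^ (i - 1) * c ^ i)
            = (p.choose i : ℝ) * ((s * s ^ (i - 1)) * c ^ i) := by ring
          _ = (p.choose i : ℝ) * (s ^ i * c ^ i) := by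
              rw [← pow_succ' s (i - 1), show i - 1 + 1 = i by omega]
          _ = (p.choose i : ℝ) * (s * c) ^ i := by rw [mul_pow]
      rw [Finset.sum_congr rfl hterm]
      have hbinom : ∑ i ∈ Finset.range (p + 1), (p.choose i : ℝ) * (s * c) ^ i
          = (1 + s * c) ^ p := by
        rw [add_comm (1 : ℝ) (s * c), add_pow]
        exact Finset.sum_congr rfl fun i _ => by rw [one_pow]; ring
      have hsplit : ∑ i ∈ Finset.range (p + 1), (p.choose i : ℝ) * (s * c) ^ i
          = ∑ i ∈ Finset.Icc 1 p, (p.choose i : ℝ) * (s * c) ^ i + 1 := by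
        rw [Finset.range_eq_Ico, Finset.sum_eq_sum_Ico_succ_bot (by omega : 0 < p + 1)]
        rw [Finset.Ico_add_one_right_eq_Icc]
        simp [add_comm]
      have h2 : ∑ i ∈ Finset.Icc 1 p, (p.choose i : ℝ) * (s * c) ^ i = (1 + s * c) ^ p - 1 := by
        rw [← hbinom, hsplit]; ring
      rw [h2, hc1]
    rw [hL, hR]

private lemma key_bound {A B : Matrix (Fin d) (Fin d) ℝ} (hA : A.PosDef)
    (v : Fin d → ℝ) {c : ℝ} (hc0 : 0 ≤ c)
    (hc1 : 1 + (v ⬝ᵥ A *ᵥ v) * c = c)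
    (hB : B = A + c • vecMulVec (A *ᵥ v) (A *ᵥ v)) :
    ∀ k a b : ℕ, v ⬝ᵥ (A ^ (a + 1) * B ^ k * A ^ (b + 1)) *ᵥ v ≤
      (v ⬝ᵥ (A ^ (a + b + 2 + k)) *ᵥ v) * c ^ k := by
  have hAt : Aᵀ = A := by
    rw [← Matrix.conjTranspose_eq_transpose_of_trivial]; exact hA.isHermitian
  have hf0 : ∀ j, 0 ≤ v ⬝ᵥ (A ^ j) *ᵥ v := fun j => by
    simpa using (hA.posSemidef.pow j).dotProduct_mulVec_nonneg v
  have hck : ∀ k : ℕ, (0:ℝ) ≤ c ^ k := fun k => pow_nonneg hc0 k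
  intro k
  induction k with
  | zero =>
    intro a b
    rw [pow_zero, mul_one, pow_zero, mul_one, ← pow_add,
      show a + 1 + (b + 1) = a + b + 2 + 0 by omega]
  | succ k ih =>
    intro a b
    set w : Fin d → ℝ := A *ᵥ v with hw
    set M := A ^ (a + 1) * B ^ k with hM
    have hMB : A ^ (a + 1) * B ^ (k + 1) * A ^ (b + 1) = M * B * A ^ (b + 1) := by
      rw [hM, pow_succ B k, ← mul_assoc]
    have hE : vecMulVec w w * A ^ (b + 1) = vecMulVec w (A ^ (b + 2) *ᵥ v) := by
      rw [vvT_mul, Matrix.transpose_pow, hAt, hw, Matrix.mulVec_mulVec, ← pow_succ]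
    have hsplit : M * B * A ^ (b + 1)
        = M * A ^ (b + 2) + c • vecMulVec (M *ᵥ w) (A ^ (b + 2) *ᵥ v) := by
      rw [hB, mul_add, add_mul, mul_assoc M A, ← pow_succ']
      congr 1
      rw [mul_smul_comm, Matrix.smul_mul, mul_assoc, hE, mul_vvT]
    have hdot : v ⬝ᵥ (M * B * A ^ (b + 1)) *ᵥ v
        = v ⬝ᵥ (M * A ^ (b + 2)) *ᵥ v
          + c * ((v ⬝ᵥ M *ᵥ w) * ((A ^ (b + 2) *ᵥ v) ⬝ᵥ v)) := by
      rw [hsplit, Matrix.add_mulVec, dotProduct_add, Matrix.smul_mulVec,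
        dotProduct_smul, smul_eq_mul, dot_vvT]
    have hX1 : v ⬝ᵥ (M * A ^ (b + 2)) *ᵥ v
        ≤ (v ⬝ᵥ (A ^ (a + b + 2 + (k + 1))) *ᵥ v) * c ^ k := by
      have := ih a (b + 1)
      rw [show a + (b + 1) + 2 + k = a + b + 2 + (k + 1) by omega] at this
      exact this
    have hX2 : v ⬝ᵥ M *ᵥ w ≤ (v ⬝ᵥ (A ^ (a + 2 + k)) *ᵥ v) * c ^ k := by
      have h1 : v ⬝ᵥ M *ᵥ w = v ⬝ᵥ (A ^ (a + 1) * B ^ k * A ^ (0 + 1)) *ᵥ v := by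
        rw [hw, Matrix.mulVec_mulVec, hM, show (0:ℕ) + 1 = 1 by rfl, pow_one]
      have := ih a 0
      rw [show a + 0 + 2 + k = a + 2 + k by omega] at this
      rw [h1]
      exact this
    have hX3 : (A ^ (b + 2) *ᵥ v) ⬝ᵥ v = v ⬝ᵥ (A ^ (b + 2)) *ᵥ v := dotProduct_comm _ _
    have hchain : (v ⬝ᵥ (A ^ (a + 2 + k)) *ᵥ v) * (v ⬝ᵥ (A ^ (b + 2)) *ᵥ v)
        ≤ (v ⬝ᵥ A *ᵥ v) * (v ⬝ᵥ (A ^ (a + b + 2 + (k + 1))) *ᵥ v) := by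
      have := f_chain hA v (a + k + 1) (b + 1)
      rw [show a + k + 1 + 1 = a + 2 + k by omega,
        show b + 1 + 1 = b + 2 by omega,
        show a + k + 1 + (b + 1) + 1 = a + b + 2 + (k + 1) by omega,
        pow_one] at this
      exact this
    rw [hMB, hdot, hX3]
    set t := v ⬝ᵥ (A ^ (a + b + 2 + (k + 1))) *ᵥ v with ht
    set f2 := v ⬝ᵥ (A ^ (a + 2 + k)) *ᵥ v with hf2
    set f3 := v ⬝ᵥ (A ^ (b + 2)) *ᵥ v with hf3
    set s := v ⬝ᵥ A *ᵥ v with hs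
    have step2 : (v ⬝ᵥ M *ᵥ w) * f3 ≤ (f2 * c ^ k) * f3 :=
      mul_le_mul_of_nonneg_right hX2 (hf0 (b + 2))
    have step4 : (f2 * f3) * c ^ k ≤ (s * t) * c ^ k :=
      mul_le_mul_of_nonneg_right hchain (hck k)
    calc v ⬝ᵥ (M * A ^ (b + 2)) *ᵥ v + c * ((v ⬝ᵥ M *ᵥ w) * f3)
        ≤ t * c ^ k + c * ((s * t) * c ^ k) := by
          have h5 : (v ⬝ᵥ M *ᵥ w) * f3 ≤ (s * t) * c ^ k := by
            calc (v ⬝ᵥ M *ᵥ w) * f3 ≤ (f2 * c ^ k) * f3 := step2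
              _ = (f2 * f3) * c ^ k := by ring
              _ ≤ (s * t) * c ^ k := step4
          exact add_le_add hX1 (mul_le_mul_of_nonneg_left h5 hc0)
      _ = t * c ^ (k + 1) := by
          rw [pow_succ]
          linear_combination (t * c ^ k) * hc1

theorem stmt2 {d : ℕ} (p : ℕ) (hp : 1 ≤ p)
    (Y : Matrix (Fin d) (Fin d) ℝ) (hY : Y.PosDef)
    (v : Fin d → ℝ) (hv : v ⬝ᵥ Y⁻¹ *ᵥ v < 1) :
    (Y - vecMulVec v v).PosDef ∧
    ((Y - vecMulVec v v)⁻¹ ^ p).trace ≤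
      (Y⁻¹ ^ p).trace + ∑ i ∈ Finset.Icc 1 p, (p.choose i : ℝ) *
        (v ⬝ᵥ Y⁻¹ *ᵥ v) ^ (i - 1) * (v ⬝ᵥ (Y⁻¹ ^ (p + 1)) *ᵥ v) /
          (1 - v ⬝ᵥ Y⁻¹ *ᵥ v) ^ i := by
  have hA : (Y⁻¹).PosDef := hY.inv
  have hAt : (Y⁻¹)ᵀ = Y⁻¹ := by
    rw [← Matrix.conjTranspose_eq_transpose_of_trivial]; exact hA.isHermitian
  have hYt : Yᵀ = Y := by
    rw [← Matrix.conjTranspose_eq_transpose_of_trivial]; exact hY.isHermitian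
  have hs0 : 0 ≤ v ⬝ᵥ Y⁻¹ *ᵥ v := by simpa using hA.posSemidef.dotProduct_mulVec_nonneg v
  have hdetY : IsUnit Y.det := isUnit_iff_ne_zero.mpr hY.det_pos.ne'
  have hYA : Y * Y⁻¹ = 1 := Matrix.mul_nonsing_inv Y hdetY
  -- Part 1 : positive definiteness
  have part1 : (Y - vecMulVec v v).PosDef := by
    have hT := hY.posSemidef
    set T := CFC.sqrt Y with hTdef
    have hTT : T * T = Y := CFC.sqrt_mul_sqrt_self Y hT.nonneg
    have hTt : Tᵀ = T := by
      rw [← Matrix.conjTranspose_eq_transpose_of_trivial]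
      exact (CFC.sqrt_nonneg Y).posSemidef.isHermitian
    have hdetT : IsUnit T.det := by
      have h2 : T.det * T.det = Y.det := by rw [← Matrix.det_mul, hTT]
      refine isUnit_iff_ne_zero.mpr fun h => ?_
      rw [h, mul_zero] at h2
      exact hY.det_pos.ne' h2.symm
    have hTit : (T⁻¹)ᵀ = T⁻¹ := by rw [Matrix.transpose_nonsing_inv, hTt]
    refine Matrix.PosDef.of_dotProduct_mulVec_pos ?_ ?_
    · rw [Matrix.IsHermitian, Matrix.conjTranspose_eq_transpose_of_trivial,
        Matrix.transpose_sub, hYt]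
      congr 1
      ext i j
      simp [vecMulVec_apply, mul_comm]
    · intro x hx
      have hq : star x ⬝ᵥ (Y - vecMulVec v v) *ᵥ x
          = x ⬝ᵥ Y *ᵥ x - (v ⬝ᵥ x) * (v ⬝ᵥ x) := by
        rw [star_trivial, Matrix.sub_mulVec, dotProduct_sub, dot_vvT, dotProduct_comm x v]
      have hYx : 0 < x ⬝ᵥ Y *ᵥ x := by simpa using hY.dotProduct_mulVec_pos hx
      have hkey : (v ⬝ᵥ x) ^ 2 ≤ (v ⬝ᵥ Y⁻¹ *ᵥ v) * (x ⬝ᵥ Y *ᵥ x) := by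
        have hvx : v ⬝ᵥ x = (T⁻¹ *ᵥ v) ⬝ᵥ (T *ᵥ x) := by
          rw [dot_shift hTit, Matrix.nonsing_inv_mul T hdetT, Matrix.one_mulVec]
        have h1 : (T⁻¹ *ᵥ v) ⬝ᵥ (T⁻¹ *ᵥ v) = v ⬝ᵥ Y⁻¹ *ᵥ v := by
          rw [dot_shift hTit, ← Matrix.mul_inv_rev, hTT]
        have h2 : (T *ᵥ x) ⬝ᵥ (T *ᵥ x) = x ⬝ᵥ Y *ᵥ x := by
          rw [dot_shift hTt, hTT]
        rw [hvx, ← h1, ← h2]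
        exact dot_cs' _ _
      rw [hq]
      nlinarith [hkey]
  refine ⟨part1, ?_⟩
  -- Part 2 : the trace bound
  set s : ℝ := v ⬝ᵥ Y⁻¹ *ᵥ v with hsdef
  set c : ℝ := (1 - s)⁻¹ with hcdef
  have h1s : (0 : ℝ) < 1 - s := by linarith
  have hcpos : 0 < c := by rw [hcdef]; exact inv_pos.mpr h1s
  have hc1 : 1 + s * c = c := by rw [hcdef]; field_simp; ring
  set w : Fin d → ℝ := Y⁻¹ *ᵥ v with hw
  set E : Matrix (Fin d) (Fin d) ℝ := vecMulVec w w with hE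
  -- Sherman-Morrison
  have hSM : (Y - vecMulVec v v)⁻¹ = Y⁻¹ + c • E := by
    apply Matrix.inv_eq_right_inv
    have hvw : v ⬝ᵥ w = s := rfl
    rw [hE, sub_mul, mul_add, mul_add, hYA, Matrix.mul_smul, Matrix.mul_smul]
    rw [mul_vvT Y w w,
      show Y *ᵥ w = v from by rw [hw, Matrix.mulVec_mulVec, hYA, Matrix.one_mulVec]]
    rw [vvT_mul (Y⁻¹) v v, hAt, ← hw]
    rw [vvT_mul_vvT v v w w, hvw, smul_smul]
    set V := vecMulVec v w with hV
    have hcV : c • V = V + (c * s) • V := by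
      nth_rewrite 1 [show c = 1 + c * s from by rw [mul_comm]; linarith]
      rw [add_smul, one_smul]
    rw [hcV]
    abel
  set B : Matrix (Fin d) (Fin d) ℝ := (Y - vecMulVec v v)⁻¹ with hBdef
  have hB : B = Y⁻¹ + c • vecMulVec (Y⁻¹ *ᵥ v) (Y⁻¹ *ᵥ v) := by
    rw [hSM, hE, hw]
  have hBA : B - Y⁻¹ = c • E := by rw [hSM]; exact add_sub_cancel_left _ _
  have hkey := key_bound hA v hcpos.le (by exact hc1) hB
  -- trace telescoping
  have htel := telescope B (Y⁻¹) p
  have htr : (B ^ p).trace = (Y⁻¹ ^ p).trace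
      + ∑ k ∈ Finset.range p, (B ^ k * (B - Y⁻¹) * (Y⁻¹) ^ (p - 1 - k)).trace := by
    rw [← Matrix.trace_sum, ← htel, Matrix.trace_sub]
    ring
  have hterm : ∀ k ∈ Finset.range p,
      (B ^ k * (B - Y⁻¹) * (Y⁻¹) ^ (p - 1 - k)).trace
        ≤ (v ⬝ᵥ ((Y⁻¹) ^ (p + 1)) *ᵥ v) * c ^ (k + 1) := by
    intro k hk
    have hkp : k < p := Finset.mem_range.mp hk
    set m := p - 1 - k with hm
    have htr1 : (B ^ k * (B - Y⁻¹) * (Y⁻¹) ^ m).trace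
        = c * (v ⬝ᵥ ((Y⁻¹) ^ (m + 1) * B ^ k * (Y⁻¹) ^ (0 + 1)) *ᵥ v) := by
      rw [hBA, mul_smul_comm, Matrix.smul_mul, Matrix.trace_smul, smul_eq_mul]
      congr 1
      rw [Matrix.trace_mul_comm, ← mul_assoc, hE, trace_mul_vvT]
      rw [hw, Matrix.mulVec_mulVec, dot_shift hAt]
      congr 2
      rw [show (0:ℕ) + 1 = 1 by rfl, pow_one, pow_succ']
      noncomm_ring
    rw [htr1]
    have hb := hkey k m 0
    rw [show m + 0 + 2 + k = p + 1 by omega] at hb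
    calc c * (v ⬝ᵥ ((Y⁻¹) ^ (m + 1) * B ^ k * (Y⁻¹) ^ (0 + 1)) *ᵥ v)
        ≤ c * ((v ⬝ᵥ ((Y⁻¹) ^ (p + 1)) *ᵥ v) * c ^ k) :=
          mul_le_mul_of_nonneg_left hb hcpos.le
      _ = (v ⬝ᵥ ((Y⁻¹) ^ (p + 1)) *ᵥ v) * c ^ (k + 1) := by rw [pow_succ]; ring
  have hsum : (B ^ p).trace ≤ (Y⁻¹ ^ p).trace
      + ∑ k ∈ Finset.range p, (v ⬝ᵥ ((Y⁻¹) ^ (p + 1)) *ᵥ v) * c ^ (k + 1) := by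
    rw [htr]
    exact add_le_add_right (Finset.sum_le_sum hterm) _
  refine hsum.trans ?_
  have hfin : ∑ k ∈ Finset.range p, (v ⬝ᵥ ((Y⁻¹) ^ (p + 1)) *ᵥ v) * c ^ (k + 1)
      = ∑ i ∈ Finset.Icc 1 p, (p.choose i : ℝ) * s ^ (i - 1)
          * (v ⬝ᵥ ((Y⁻¹) ^ (p + 1)) *ᵥ v) / (1 - s) ^ i := by
    have hbi := binom_id s hs0 hv p hp
    rw [← hcdef] at hbi
    rw [← Finset.mul_sum, hbi, Finset.mul_sum]
    refine Finset.sum_congr rfl fun i _ => ?_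
    rw [div_eq_mul_inv, ← inv_pow, ← hcdef]
    ring
  rw [hfin]
end

section
/- Let A and B be d×d real positive definite matrices and p ≥ 1 an integer. Then tr(A · B^{−p−1}) ≥ (tr(B^{−p}) / tr(A^{−p}))^{1/p} · tr(B^{−p}). -/
open Matrix Finset

section helpers

variable {n : Type*} [Fintype n] [DecidableEq n]

private lemma conj_pow' (U D : Matrix n n ℝ) (h1 : star U * U = 1) (h2 : U * star U = 1)
    (k : ℕ) : (U * D * star U) ^ k = U * D ^ k * star U := by
  induction k with
  | zero => simpa using h2.symm
  | succ m ih =>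
      rw [pow_succ, pow_succ, ih]
      calc U * D ^ m * star U * (U * D * star U)
          = U * D ^ m * (star U * U) * D * star U := by simp only [Matrix.mul_assoc]
        _ = U * (D ^ m * D) * star U := by rw [h1]; simp only [Matrix.mul_one, Matrix.mul_assoc]

private lemma conj_mul' (V D E : Matrix n n ℝ) (h1 : star V * V = 1) :
    (V * D * star V) * (V * E * star V) = V * (D * E) * star V := by
  calc (V * D * star V) * (V * E * star V)
      = V * (D * ((star V * V) * (E * star V))) := by simp only [Matrix.mul_assoc]
    _ = V * (D * E) * star V := by rw [h1, Matrix.one_mul]; simp only [Matrix.mul_assoc]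

private lemma trace_mul_diagonal' (M : Matrix n n ℝ) (f : n → ℝ) :
    (M * diagonal f).trace = ∑ i, M i i * f i := by
  simp [Matrix.trace, Matrix.diag, Matrix.mul_diagonal]

private lemma conj_diag_apply (M : Matrix n n ℝ) (f : n → ℝ) (i : n) :
    (star M * diagonal f * M) i i = ∑ j, f j * M j i ^ 2 := by
  rw [Matrix.mul_apply]
  refine Finset.sum_congr rfl fun j _ => ?_
  rw [Matrix.mul_diagonal, Matrix.star_apply, star_trivial]
  ring

private lemma jensen_inv_pow {ι : Type*} [Fintype ι] (p : ℕ) (w lam : ι → ℝ)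
    (hw : ∀ j, 0 ≤ w j) (hw1 : ∑ j, w j = 1) (hl : ∀ j, 0 < lam j) (hp : 1 ≤ p) :
    (∑ j, w j * lam j)⁻¹ ^ p ≤ ∑ j, w j * (lam j)⁻¹ ^ p := by
  have hconv : ConvexOn ℝ (Set.Ioi 0) (fun x : ℝ => x ^ (-(p : ℤ))) :=
    (strictConvexOn_zpow (by omega) (by omega)).convexOn
  have h := hconv.map_sum_le (t := Finset.univ) (w := w) (p := lam)
    (fun i _ => hw i) hw1 (fun i _ => hl i)
  simpa [smul_eq_mul, _root_.zpow_neg, zpow_natCast, inv_pow] using h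

end helpers

private lemma rpow_neg_natCast {x : ℝ} (hx : 0 < x) (p : ℕ) :
    x ^ (-(p : ℝ)) = x⁻¹ ^ p := by
  rw [Real.rpow_neg hx.le, Real.rpow_natCast, inv_pow]

private lemma scalar_key {ι : Type*} [Fintype ι] [Nonempty ι] (p : ℕ) (hp : 1 ≤ p)
    (a mu : ι → ℝ) (T : ℝ) (ha : ∀ i, 0 < a i) (hmu : ∀ i, 0 < mu i)
    (hT : ∑ i, (a i)⁻¹ ^ p ≤ T) :
    ((∑ i, mu i ^ p) / T) ^ ((1 : ℝ) / p) * (∑ i, mu i ^ p) ≤ ∑ i, a i * mu i ^ (p + 1) := by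
  classical
  set r : ℝ := (p : ℝ) with hr_def
  have hr : 0 < r := by simp [hr_def]; omega
  have hr1 : 0 < r + 1 := by linarith
  set S : ℝ := ∑ i, mu i ^ p with hS_def
  set X : ℝ := ∑ i, a i * mu i ^ (p + 1) with hX_def
  have hS : 0 < S := Finset.sum_pos (fun i _ => pow_pos (hmu i) p) univ_nonempty
  have hX : 0 < X := Finset.sum_pos
    (fun i _ => mul_pos (ha i) (pow_pos (hmu i) (p + 1))) univ_nonempty
  have hT'pos : 0 < ∑ i, (a i)⁻¹ ^ p := Finset.sum_pos
    (fun i _ => pow_pos (inv_pos.mpr (ha i)) p) univ_nonempty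
  have hT0 : 0 < T := lt_of_lt_of_le hT'pos hT
  -- Hölder
  set f : ι → ℝ := fun i => a i ^ (r / (r + 1)) * mu i ^ r with hf_def
  set g : ι → ℝ := fun i => a i ^ (-(r / (r + 1))) with hg_def
  have hPQ : Real.HolderConjugate ((r + 1) / r) (r + 1) := by
    constructor
    · rw [inv_div, inv_one, ← one_div, ← add_div, div_self hr1.ne']
    · positivity
    · positivity
  have hf_pos : ∀ i, 0 < f i := fun i =>
    mul_pos (Real.rpow_pos_of_pos (ha i) _) (Real.rpow_pos_of_pos (hmu i) _)
  have hg_pos : ∀ i, 0 < g i := fun i => Real.rpow_pos_of_pos (ha i) _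
  have holder := Real.inner_le_Lp_mul_Lq (univ : Finset ι) f g hPQ
  have hfg : ∀ i, f i * g i = mu i ^ p := by
    intro i
    have h1 : a i ^ (r / (r + 1)) * a i ^ (-(r / (r + 1))) = 1 := by
      rw [← Real.rpow_add (ha i)]; simp
    calc f i * g i = (a i ^ (r / (r + 1)) * a i ^ (-(r / (r + 1)))) * mu i ^ r := by
          rw [hf_def, hg_def]; ring
      _ = mu i ^ p := by rw [h1, one_mul, hr_def, Real.rpow_natCast]
  have hfP : ∀ i, |f i| ^ ((r + 1) / r) = a i * mu i ^ (p + 1) := by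
    intro i
    rw [abs_of_pos (hf_pos i), hf_def]
    rw [Real.mul_rpow (Real.rpow_nonneg (ha i).le _) (Real.rpow_nonneg (hmu i).le _),
      ← Real.rpow_mul (ha i).le, ← Real.rpow_mul (hmu i).le]
    rw [show r / (r + 1) * ((r + 1) / r) = 1 by field_simp,
      show r * ((r + 1) / r) = r + 1 by field_simp]
    rw [Real.rpow_one, show r + 1 = ((p + 1 : ℕ) : ℝ) by push_cast [hr_def]; ring,
      Real.rpow_natCast]
  have hgQ : ∀ i, |g i| ^ (r + 1) = (a i)⁻¹ ^ p := by
    intro i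
    rw [abs_of_pos (hg_pos i), hg_def, ← Real.rpow_mul (ha i).le,
      show -(r / (r + 1)) * (r + 1) = -r by field_simp, hr_def, rpow_neg_natCast (ha i)]
  rw [Finset.sum_congr rfl (fun i _ => hfg i), Finset.sum_congr rfl (fun i _ => hfP i),
    Finset.sum_congr rfl (fun i _ => hgQ i)] at holder
  replace holder : S ≤ X ^ (r / (r + 1)) * T ^ (1 / (r + 1)) := by
    rw [one_div_div] at holder
    refine holder.trans (mul_le_mul_of_nonneg_left ?_ (Real.rpow_nonneg hX.le _))
    exact Real.rpow_le_rpow hT'pos.le hT (by positivity)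
  -- conclude
  rw [Real.div_rpow hS.le hT0.le, div_mul_eq_mul_div, div_le_iff₀ (by positivity)]
  have key : S ^ ((1 : ℝ) / r) * S = S ^ ((r + 1) / r) := by
    nth_rewrite 2 [← Real.rpow_one S]
    rw [← Real.rpow_add hS]; congr 1; field_simp; ring
  rw [key]
  calc S ^ ((r + 1) / r) ≤ (X ^ (r / (r + 1)) * T ^ (1 / (r + 1))) ^ ((r + 1) / r) :=
        Real.rpow_le_rpow hS.le holder (by positivity)
    _ = X * T ^ ((1 : ℝ) / r) := by
        rw [Real.mul_rpow (by positivity) (by positivity), ← Real.rpow_mul hX.le,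
          ← Real.rpow_mul hT0.le, show r / (r + 1) * ((r + 1) / r) = 1 by field_simp,
          show 1 / (r + 1) * ((r + 1) / r) = 1 / r by field_simp, Real.rpow_one]
    _ = X * T ^ ((1 : ℝ) / r) := rfl

theorem stmt3 {d : ℕ} (p : ℕ) (hp : 1 ≤ p)
    (A B : Matrix (Fin d) (Fin d) ℝ) (hA : A.PosDef) (hB : B.PosDef) :
    ((B⁻¹ ^ p).trace / (A⁻¹ ^ p).trace) ^ ((1 : ℝ) / p) * (B⁻¹ ^ p).trace ≤
      (A * B⁻¹ ^ (p + 1)).trace := by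
  rcases Nat.eq_zero_or_pos d with hd | hd
  · subst hd
    simp [Matrix.trace]
  haveI : Nonempty (Fin d) := Fin.pos_iff_nonempty.mp hd
  have hC : (B⁻¹).PosDef := hB.inv
  set U : Matrix (Fin d) (Fin d) ℝ := (hC.1.eigenvectorUnitary : Matrix (Fin d) (Fin d) ℝ)
    with hU_def
  set μ : Fin d → ℝ := hC.1.eigenvalues with hmu_def
  have hμpos : ∀ i, 0 < μ i := fun i => hC.eigenvalues_pos i
  have hU1 : star U * U = 1 := mem_unitaryGroup_iff'.mp hC.1.eigenvectorUnitary.2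
  have hU2 : U * star U = 1 := mem_unitaryGroup_iff.mp hC.1.eigenvectorUnitary.2
  have hCspec : B⁻¹ = U * diagonal μ * star U := by
    have h := hC.1.spectral_theorem
    simpa using h
  set V : Matrix (Fin d) (Fin d) ℝ := (hA.1.eigenvectorUnitary : Matrix (Fin d) (Fin d) ℝ)
    with hV_def
  set lam : Fin d → ℝ := hA.1.eigenvalues with hlam_def
  have hlampos : ∀ j, 0 < lam j := fun j => hA.eigenvalues_pos j
  have hV1 : star V * V = 1 := mem_unitaryGroup_iff'.mp hA.1.eigenvectorUnitary.2
  have hV2 : V * star V = 1 := mem_unitaryGroup_iff.mp hA.1.eigenvectorUnitary.2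
  have hAspec : A = V * diagonal lam * star V := by
    have h := hA.1.spectral_theorem
    simpa using h
  set W : Matrix (Fin d) (Fin d) ℝ := star V * U with hW_def
  have hW1 : star W * W = 1 := by
    rw [hW_def, Matrix.star_mul, star_star]
    calc star U * V * (star V * U) = star U * ((V * star V) * U) := by
          simp only [Matrix.mul_assoc]
      _ = 1 := by rw [hV2, Matrix.one_mul]; exact hU1
  have hW2 : W * star W = 1 := by
    rw [hW_def, Matrix.star_mul, star_star]
    calc star V * U * (star U * V) = star V * ((U * star U) * V) := by
          simp only [Matrix.mul_assoc]
      _ = 1 := by rw [hU2, Matrix.one_mul]; exact hV1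
  set a : Fin d → ℝ := fun i => ∑ j, lam j * W j i ^ 2 with ha_def
  have hconj : star U * A * U = star W * diagonal lam * W := by
    rw [hAspec, hW_def, Matrix.star_mul, star_star]
    simp only [Matrix.mul_assoc]
  have ha_eq : ∀ i, (star U * A * U) i i = a i := fun i => by
    rw [hconj]; exact conj_diag_apply W lam i
  have hcol : ∀ i, ∑ j, W j i ^ 2 = 1 := by
    intro i
    have h : (star W * W) i i = 1 := by rw [hW1, Matrix.one_apply_eq]
    rw [Matrix.mul_apply] at h
    rw [← h]
    exact Finset.sum_congr rfl fun j _ => by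
      rw [Matrix.star_apply, star_trivial]; ring
  have hrow : ∀ j, ∑ i, W j i ^ 2 = 1 := by
    intro j
    have h : (W * star W) j j = 1 := by rw [hW2, Matrix.one_apply_eq]
    rw [Matrix.mul_apply] at h
    rw [← h]
    exact Finset.sum_congr rfl fun i _ => by
      rw [Matrix.star_apply, star_trivial]; ring
  have ha_pos : ∀ i, 0 < a i := by
    intro i
    have hex : ∃ j, W j i ^ 2 ≠ 0 := by
      by_contra h
      push_neg at h
      have h1 := hcol i
      simp only [h, Finset.sum_const_zero] at h1
      norm_num at h1
    obtain ⟨j0, hj0⟩ := hex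
    exact Finset.sum_pos' (fun j _ => mul_nonneg (hlampos j).le (sq_nonneg _))
      ⟨j0, Finset.mem_univ _, mul_pos (hlampos j0) ((sq_nonneg _).lt_of_ne (Ne.symm hj0))⟩
  -- trace computations
  have hS_eq : (B⁻¹ ^ p).trace = ∑ i, μ i ^ p := by
    rw [hCspec, conj_pow' U _ hU1 hU2, trace_mul_cycle, hU1, Matrix.one_mul, diagonal_pow,
      trace_diagonal]
    simp
  have hX_eq : (A * B⁻¹ ^ (p + 1)).trace = ∑ i, a i * μ i ^ (p + 1) := by
    rw [hCspec, conj_pow' U _ hU1 hU2]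
    have h : A * (U * diagonal μ ^ (p + 1) * star U)
        = A * U * diagonal μ ^ (p + 1) * star U := by simp only [Matrix.mul_assoc]
    rw [h, trace_mul_cycle, ← Matrix.mul_assoc, diagonal_pow, trace_mul_diagonal']
    refine Finset.sum_congr rfl fun i _ => ?_
    rw [ha_eq i, Pi.pow_apply]
  have hlam_ne : ∀ j, lam j ≠ 0 := fun j => (hlampos j).ne'
  have hAinv : A⁻¹ = V * diagonal (fun j => (lam j)⁻¹) * star V := by
    apply Matrix.inv_eq_right_inv
    conv_lhs => rw [hAspec]
    rw [conj_mul' V _ _ hV1, diagonal_mul_diagonal]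
    have h1 : diagonal (fun i => lam i * (lam i)⁻¹) = (1 : Matrix (Fin d) (Fin d) ℝ) := by
      have h2 : (fun i => lam i * (lam i)⁻¹) = (1 : Fin d → ℝ) :=
        funext fun j => mul_inv_cancel₀ (hlam_ne j)
      rw [h2]; exact Matrix.diagonal_one
    rw [h1, Matrix.mul_one]
    exact hV2
  have hT_eq : (A⁻¹ ^ p).trace = ∑ j, (lam j)⁻¹ ^ p := by
    rw [hAinv, conj_pow' V _ hV1 hV2, trace_mul_cycle, hV1, Matrix.one_mul, diagonal_pow,
      trace_diagonal]
    simp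
  have hT_ge : ∑ i, (a i)⁻¹ ^ p ≤ (A⁻¹ ^ p).trace := by
    rw [hT_eq]
    have step : ∀ i, (a i)⁻¹ ^ p ≤ ∑ j, W j i ^ 2 * (lam j)⁻¹ ^ p := by
      intro i
      have h := jensen_inv_pow p (fun j => W j i ^ 2) lam (fun j => sq_nonneg _)
        (hcol i) hlampos hp
      have e : ∑ j, W j i ^ 2 * lam j = a i :=
        Finset.sum_congr rfl fun j _ => mul_comm _ _
      rw [e] at h
      exact h
    calc ∑ i, (a i)⁻¹ ^ p ≤ ∑ i, ∑ j, W j i ^ 2 * (lam j)⁻¹ ^ p :=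
          Finset.sum_le_sum fun i _ => step i
      _ = ∑ j, (∑ i, W j i ^ 2) * (lam j)⁻¹ ^ p := by
          rw [Finset.sum_comm]
          exact Finset.sum_congr rfl fun j _ => (Finset.sum_mul _ _ _).symm
      _ = ∑ j, (lam j)⁻¹ ^ p :=
          Finset.sum_congr rfl fun j _ => by rw [hrow j, one_mul]
  rw [hS_eq, hX_eq]
  exact scalar_key p hp a μ ((A⁻¹ ^ p).trace) ha_pos hμpos hT_ge
end

section
/- Let A and B be d×d real positive definite matrices and p ≥ 1 an integer. Then tr(B^{−p}) ≤ (tr(A · B^{−p−1}))^{p/(p+1)} · (tr(A^{−p}))^{1/(p+1)}. -/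
open Matrix Finset

lemma psd_cs {d : ℕ} {M : Matrix (Fin d) (Fin d) ℝ} (hM : M.PosSemidef)
    (x y : Fin d → ℝ) :
    (x ⬝ᵥ M *ᵥ y) ^ 2 ≤ (x ⬝ᵥ M *ᵥ x) * (y ⬝ᵥ M *ᵥ y) := by
  obtain ⟨C, hCsym, hCC⟩ : ∃ C : Matrix (Fin d) (Fin d) ℝ, Cᵀ = C ∧ C * C = M := by
    open scoped MatrixOrder in refine ⟨CFC.sqrt M, ?_, CFC.sqrt_mul_sqrt_self M hM.nonneg⟩
    open scoped MatrixOrder in have := (CFC.sqrt_nonneg M).posSemidef.isHermitian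
    simpa [Matrix.IsHermitian, Matrix.conjTranspose_eq_transpose_of_trivial] using this
  have key : ∀ u w : Fin d → ℝ, u ⬝ᵥ M *ᵥ w = (C *ᵥ u) ⬝ᵥ (C *ᵥ w) := by
    intro u w
    rw [← hCC, ← Matrix.mulVec_mulVec, Matrix.dotProduct_mulVec u C,
      ← Matrix.mulVec_transpose, hCsym, dotProduct_comm,
      Matrix.dotProduct_mulVec, ← Matrix.mulVec_transpose, hCsym,
      dotProduct_comm]
  rw [key x y, key x x, key y y]
  have := Finset.sum_mul_sq_le_sq_mul_sq Finset.univ (C *ᵥ x) (C *ᵥ y)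
  simpa [dotProduct, pow_two] using this

lemma sym_dot {d : ℕ} {M : Matrix (Fin d) (Fin d) ℝ} (hM : Mᵀ = M)
    (x y : Fin d → ℝ) : (M *ᵥ x) ⬝ᵥ y = x ⬝ᵥ (M *ᵥ y) := by
  rw [Matrix.dotProduct_mulVec, ← Matrix.mulVec_transpose, hM, dotProduct_comm]

lemma key_ineq {d : ℕ} {A : Matrix (Fin d) (Fin d) ℝ} (hA : A.PosDef)
    (v : Fin d → ℝ) (hv : v ⬝ᵥ v = 1) (k : ℕ) :
    1 ≤ (v ⬝ᵥ A *ᵥ v) ^ k * (v ⬝ᵥ (A⁻¹ ^ k) *ᵥ v) := by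
  have hvne : v ≠ 0 := by rintro rfl; simp at hv
  have hAdet : IsUnit A.det := isUnit_iff_ne_zero.2 hA.det_pos.ne'
  have hAsym : Aᵀ = A := by
    have := hA.isHermitian; simpa [Matrix.IsHermitian, Matrix.conjTranspose_eq_transpose_of_trivial] using this
  have hAinvsym : (A⁻¹)ᵀ = A⁻¹ := by
    have := hA.inv.isHermitian; simpa [Matrix.IsHermitian, Matrix.conjTranspose_eq_transpose_of_trivial] using this
  set t : ℝ := v ⬝ᵥ A *ᵥ v with htdef
  have ht : 0 < t := by simpa using hA.dotProduct_mulVec_pos hvne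
  set f : ℕ → ℝ := fun k => v ⬝ᵥ (A⁻¹ ^ k) *ᵥ v with hfdef
  have hf0 : f 0 = 1 := by simp [hfdef, hv]
  -- Cauchy-Schwarz base: 1 ≤ t * f 1
  have cs0 : 1 ≤ t * f 1 := by
    have h := psd_cs hA.posSemidef v (A⁻¹ *ᵥ v)
    have e1 : v ⬝ᵥ A *ᵥ (A⁻¹ *ᵥ v) = 1 := by
      rw [Matrix.mulVec_mulVec, Matrix.mul_nonsing_inv _ hAdet]; simpa using hv
    have e2 : (A⁻¹ *ᵥ v) ⬝ᵥ A *ᵥ (A⁻¹ *ᵥ v) = f 1 := by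
      rw [Matrix.mulVec_mulVec, sym_dot hAinvsym, Matrix.mulVec_mulVec,
        ← Matrix.mul_assoc, Matrix.nonsing_inv_mul _ hAdet, Matrix.one_mul]
      simp [hfdef]
    rw [e1, e2] at h; simpa using h
  -- Cauchy-Schwarz step: f (k+1) ^ 2 ≤ f k * f (k+2)
  have cs : ∀ k : ℕ, f (k + 1) ^ 2 ≤ f k * f (k + 2) := by
    intro k
    have h := psd_cs (hA.inv.posSemidef.pow k) v (A⁻¹ *ᵥ v)
    have e1 : v ⬝ᵥ (A⁻¹ ^ k) *ᵥ (A⁻¹ *ᵥ v) = f (k + 1) := by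
      rw [Matrix.mulVec_mulVec, ← pow_succ]
    have e2 : (A⁻¹ *ᵥ v) ⬝ᵥ (A⁻¹ ^ k) *ᵥ (A⁻¹ *ᵥ v) = f (k + 2) := by
      rw [Matrix.mulVec_mulVec, sym_dot hAinvsym, Matrix.mulVec_mulVec,
        ← Matrix.mul_assoc, ← pow_succ', ← pow_succ]
    rw [e1, e2] at h; exact h
  -- the sequence g k = t^k * f k
  set g : ℕ → ℝ := fun k => t ^ k * f k with hgdef
  have main : ∀ k : ℕ, 1 ≤ g k ∧ g k ≤ g (k + 1) := by
    intro k
    induction k with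
    | zero =>
      refine ⟨by simp [hgdef, hf0], ?_⟩
      simpa [hgdef, hf0] using cs0
    | succ n ih =>
      obtain ⟨h1, h2⟩ := ih
      have hgn1 : (1 : ℝ) ≤ g (n + 1) := le_trans h1 h2
      have hgnpos : 0 < g n := lt_of_lt_of_le one_pos h1
      have hsq : g (n + 1) ^ 2 ≤ g n * g (n + 2) := by
        have := cs n
        have h' : t ^ (2 * (n + 1)) * f (n + 1) ^ 2 ≤ t ^ (2 * (n + 1)) * (f n * f (n + 2)) :=
          mul_le_mul_of_nonneg_left this (by positivity)
        calc g (n + 1) ^ 2 = t ^ (2 * (n + 1)) * f (n + 1) ^ 2 := by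
              simp only [hgdef]; ring
          _ ≤ t ^ (2 * (n + 1)) * (f n * f (n + 2)) := h'
          _ = g n * g (n + 2) := by simp only [hgdef]; ring
      refine ⟨hgn1, ?_⟩
      have : g n * g (n + 1) ≤ g n * g (n + 2) := by
        calc g n * g (n + 1) ≤ g (n + 1) * g (n + 1) :=
              mul_le_mul_of_nonneg_right h2 (le_trans zero_le_one hgn1)
          _ = g (n + 1) ^ 2 := (sq _).symm
          _ ≤ g n * g (n + 2) := hsq
      exact le_of_mul_le_mul_left this hgnpos
  simpa [hgdef, hfdef] using (main k).1

lemma matconj_pow {d : ℕ} {U M : Matrix (Fin d) (Fin d) ℝ} (hU : star U * U = 1) (k : ℕ) :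
    (U * M * star U) ^ k = U * M ^ k * star U := by
  induction k with
  | zero =>
    have hUU : U * star U = 1 := by
      have := mul_eq_one_comm.mp hU
      exact this
    simp [pow_zero, hUU]
  | succ n ih =>
    rw [pow_succ, ih, pow_succ]
    calc U * M ^ n * star U * (U * M * star U)
        = U * M ^ n * (star U * U) * M * star U := by
          simp only [Matrix.mul_assoc]
      _ = U * (M ^ n * M) * star U := by rw [hU]; simp only [Matrix.mul_one, Matrix.mul_assoc]

lemma matconj_diag_entry {d : ℕ} (U M : Matrix (Fin d) (Fin d) ℝ) (i : Fin d) :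
    (star U * M * U) i i = (fun j => U j i) ⬝ᵥ (M *ᵥ fun j => U j i) := by
  simp only [Matrix.mul_apply, Matrix.star_apply, star_trivial, dotProduct,
    Matrix.mulVec, Finset.sum_mul, Finset.mul_sum]
  rw [Finset.sum_comm]
  apply Finset.sum_congr rfl; intro j _
  apply Finset.sum_congr rfl; intro k _
  ring

theorem stmt4 {d : ℕ} (p : ℕ) (hp : 1 ≤ p)
    (A B : Matrix (Fin d) (Fin d) ℝ) (hA : A.PosDef) (hB : B.PosDef) :
    (B⁻¹ ^ p).trace ≤
      ((A * B⁻¹ ^ (p + 1)).trace) ^ ((p : ℝ) / (p + 1)) *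
        ((A⁻¹ ^ p).trace) ^ ((1 : ℝ) / (p + 1)) := by
  classical
  have hBH : B.IsHermitian := hB.1
  set U : Matrix (Fin d) (Fin d) ℝ := (hBH.eigenvectorUnitary : Matrix (Fin d) (Fin d) ℝ)
    with hUdef
  have hU : star U * U = 1 := Matrix.mem_unitaryGroup_iff'.mp hBH.eigenvectorUnitary.2
  have hUU : U * star U = 1 := Matrix.mem_unitaryGroup_iff.mp hBH.eigenvectorUnitary.2
  set μ : Fin d → ℝ := hBH.eigenvalues with hμdef
  have hμpos : ∀ i, 0 < μ i := fun i => hB.eigenvalues_pos i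
  have spec : B = U * Matrix.diagonal μ * star U := by
    have := hBH.spectral_theorem
    simpa [RCLike.ofReal_real_eq_id] using this
  have hBinv : B⁻¹ = U * Matrix.diagonal (fun i => (μ i)⁻¹) * star U := by
    apply Matrix.inv_eq_right_inv
    rw [spec]
    calc U * Matrix.diagonal μ * star U * (U * Matrix.diagonal (fun i => (μ i)⁻¹) * star U)
        = U * Matrix.diagonal μ * (star U * U) * Matrix.diagonal (fun i => (μ i)⁻¹) * star U := by
          simp only [Matrix.mul_assoc]
      _ = U * (Matrix.diagonal μ * Matrix.diagonal (fun i => (μ i)⁻¹)) * star U := by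
          rw [hU]; simp only [Matrix.mul_one, Matrix.mul_assoc]
      _ = 1 := by
          rw [Matrix.diagonal_mul_diagonal]
          have : (fun i => μ i * (μ i)⁻¹) = fun _ => (1 : ℝ) := by
            funext i; exact mul_inv_cancel₀ (hμpos i).ne'
          rw [this, Matrix.diagonal_one, Matrix.mul_one, hUU]
  have hBinvPow : ∀ k : ℕ, B⁻¹ ^ k = U * Matrix.diagonal (fun i => (μ i)⁻¹ ^ k) * star U := by
    intro k
    rw [hBinv, matconj_pow hU, Matrix.diagonal_pow]
    rfl
  have htraceconj : ∀ M : Matrix (Fin d) (Fin d) ℝ, (U * M * star U).trace = M.trace := by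
    intro M
    rw [Matrix.trace_mul_cycle, hU, Matrix.one_mul]
  have tr1 : (B⁻¹ ^ p).trace = ∑ i, (μ i)⁻¹ ^ p := by
    rw [hBinvPow p, htraceconj, Matrix.trace_diagonal]
  set a : Fin d → ℝ := fun i => (star U * A * U) i i with hadef
  have tr2 : (A * B⁻¹ ^ (p + 1)).trace = ∑ i, a i * (μ i)⁻¹ ^ (p + 1) := by
    rw [hBinvPow (p + 1)]
    rw [show A * (U * Matrix.diagonal (fun i => (μ i)⁻¹ ^ (p+1)) * star U)
        = (A * U * Matrix.diagonal (fun i => (μ i)⁻¹ ^ (p+1))) * star U from by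
      simp only [Matrix.mul_assoc]]
    rw [Matrix.trace_mul_cycle]
    rw [show star U * (A * U) = star U * A * U from by rw [Matrix.mul_assoc]]
    rw [Matrix.trace]
    apply Finset.sum_congr rfl
    intro i _
    simp [Matrix.diag, Matrix.mul_diagonal, hadef]
  have tr3 : (A⁻¹ ^ p).trace = ∑ i, (star U * (A⁻¹ ^ p) * U) i i := by
    have h : (A⁻¹ ^ p).trace = (star U * (A⁻¹ ^ p) * U).trace := by
      rw [Matrix.trace_mul_cycle, hUU, Matrix.one_mul]
    rw [h, Matrix.trace]
    rfl
  set v : Fin d → Fin d → ℝ := fun i => fun j => U j i with hvdef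
  have hvnorm : ∀ i, v i ⬝ᵥ v i = 1 := by
    intro i
    have h := matconj_diag_entry U 1 i
    rw [Matrix.mul_one] at h
    rw [hvdef]
    simp only [Matrix.one_mulVec] at h ⊢
    rw [← h, hU]
    simp [Matrix.one_apply]
  have hva : ∀ i, a i = v i ⬝ᵥ A *ᵥ v i := fun i => matconj_diag_entry U A i
  have hapos : ∀ i, 0 < a i := by
    intro i
    have hvne : v i ≠ 0 := by
      intro h0
      have := hvnorm i
      rw [h0] at this; simp at this
    have := hA.dotProduct_mulVec_pos hvne
    rw [hva i]
    simpa using this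
  set b : Fin d → ℝ := fun i => ((a i)⁻¹) ^ p with hbdef
  have hbnonneg : ∀ i, 0 ≤ b i := fun i => pow_nonneg (inv_nonneg.2 (hapos i).le) _
  have hkey : ∀ i, b i ≤ (star U * (A⁻¹ ^ p) * U) i i := by
    intro i
    rw [matconj_diag_entry U (A⁻¹ ^ p) i]
    have h := key_ineq hA (v i) (hvnorm i) p
    rw [← hva i] at h
    have hpow : (0:ℝ) < a i ^ p := pow_pos (hapos i) p
    have h2 : (1:ℝ) / a i ^ p ≤ v i ⬝ᵥ (A⁻¹ ^ p) *ᵥ v i := by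
      rw [div_le_iff₀ hpow]
      linarith [h]
    simpa [hbdef, inv_pow, one_div] using h2
  have hS3 : ∑ i, b i ≤ (A⁻¹ ^ p).trace := by
    rw [tr3]; exact Finset.sum_le_sum fun i _ => hkey i
  -- Hölder
  have hp0 : (0:ℝ) < p := by exact_mod_cast hp
  have hp1 : (0:ℝ) < (p:ℝ) + 1 := by linarith
  set P : ℝ := ((p:ℝ) + 1) / p with hPdef
  set Q : ℝ := (p:ℝ) + 1 with hQdef
  have hpq : Real.HolderConjugate P Q := by
    rw [Real.holderConjugate_iff]
    constructor
    · rw [hPdef, lt_div_iff₀ hp0]; linarith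
    · rw [hPdef, hQdef]; field_simp
  set c : Fin d → ℝ := fun i => a i * (μ i)⁻¹ ^ (p + 1) with hcdef
  have hcpos : ∀ i, 0 < c i := fun i =>
    mul_pos (hapos i) (pow_pos (inv_pos.2 (hμpos i)) _)
  set F : Fin d → ℝ := fun i => (c i) ^ ((p:ℝ) / ((p:ℝ) + 1)) with hFdef
  set G : Fin d → ℝ := fun i => (b i) ^ ((1:ℝ) / ((p:ℝ) + 1)) with hGdef
  have hFG : ∀ i, F i * G i = (μ i)⁻¹ ^ p := by
    intro i
    have hx : (0:ℝ) < a i := hapos i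
    have hl : (0:ℝ) < (μ i)⁻¹ := inv_pos.2 (hμpos i)
    have eF : F i = a i ^ ((p:ℝ) / ((p:ℝ) + 1)) * (μ i)⁻¹ ^ p := by
      rw [hFdef]
      show (a i * (μ i)⁻¹ ^ (p+1)) ^ ((p:ℝ) / ((p:ℝ) + 1)) = _
      rw [Real.mul_rpow hx.le (pow_nonneg hl.le _)]
      congr 1
      rw [← Real.rpow_natCast (μ i)⁻¹ (p+1), ← Real.rpow_mul hl.le,
        ← Real.rpow_natCast (μ i)⁻¹ p]
      congr 1
      push_cast
      field_simp
    have eG : G i = a i ^ (-((p:ℝ) / ((p:ℝ) + 1))) := by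
      rw [hGdef]
      show (((a i)⁻¹ : ℝ) ^ p) ^ ((1:ℝ) / ((p:ℝ) + 1)) = _
      rw [inv_pow, ← Real.rpow_natCast (a i) p, ← Real.rpow_neg hx.le,
        ← Real.rpow_mul hx.le]
      congr 1
      ring
    rw [eF, eG]
    rw [show a i ^ ((p:ℝ) / ((p:ℝ) + 1)) * (μ i)⁻¹ ^ p * a i ^ (-((p:ℝ) / ((p:ℝ) + 1)))
        = a i ^ ((p:ℝ) / ((p:ℝ) + 1)) * a i ^ (-((p:ℝ) / ((p:ℝ) + 1))) * (μ i)⁻¹ ^ p from by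
      ring]
    rw [← Real.rpow_add hx, add_neg_cancel, Real.rpow_zero, one_mul]
  have hFP : ∀ i, F i ^ P = c i := by
    intro i
    rw [hFdef]
    show ((c i) ^ ((p:ℝ) / ((p:ℝ) + 1))) ^ P = c i
    rw [← Real.rpow_mul (hcpos i).le]
    have h1 : (p:ℝ) / ((p:ℝ) + 1) * P = 1 := by
      rw [hPdef, hQdef]; field_simp
    rw [h1, Real.rpow_one]
  have hGQ : ∀ i, G i ^ Q = b i := by
    intro i
    rw [hGdef]
    show ((b i) ^ ((1:ℝ) / ((p:ℝ) + 1))) ^ Q = b i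
    rw [← Real.rpow_mul (hbnonneg i)]
    have h1 : (1:ℝ) / ((p:ℝ) + 1) * Q = 1 := by
      rw [hQdef]; field_simp
    rw [h1, Real.rpow_one]
  have hold := Real.inner_le_Lp_mul_Lq_of_nonneg (s := Finset.univ) hpq
    (f := F) (g := G)
    (fun i _ => Real.rpow_nonneg (hcpos i).le _)
    (fun i _ => Real.rpow_nonneg (hbnonneg i) _)
  have hsumF : ∑ i, F i ^ P = ∑ i, c i := Finset.sum_congr rfl fun i _ => hFP i
  have hsumG : ∑ i, G i ^ Q = ∑ i, b i := Finset.sum_congr rfl fun i _ => hGQ i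
  rw [hsumF, hsumG] at hold
  have hinvP : 1 / P = (p:ℝ) / ((p:ℝ) + 1) := by
    rw [hPdef, one_div_div]
  have hinvQ : 1 / Q = (1:ℝ) / ((p:ℝ) + 1) := by rw [hQdef]
  rw [hinvP, hinvQ] at hold
  have hcsum_nonneg : (0:ℝ) ≤ ∑ i, c i := Finset.sum_nonneg fun i _ => (hcpos i).le
  have hfinal : (∑ i, b i) ^ ((1:ℝ) / ((p:ℝ) + 1)) ≤
      ((A⁻¹ ^ p).trace) ^ ((1:ℝ) / ((p:ℝ) + 1)) :=
    Real.rpow_le_rpow (Finset.sum_nonneg fun i _ => hbnonneg i) hS3 (by positivity)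
  calc (B⁻¹ ^ p).trace = ∑ i, (μ i)⁻¹ ^ p := tr1
    _ = ∑ i, F i * G i := Finset.sum_congr rfl fun i _ => (hFG i).symm
    _ ≤ (∑ i, c i) ^ ((p:ℝ) / ((p:ℝ) + 1)) * (∑ i, b i) ^ ((1:ℝ) / ((p:ℝ) + 1)) := hold
    _ ≤ (∑ i, c i) ^ ((p:ℝ) / ((p:ℝ) + 1)) * ((A⁻¹ ^ p).trace) ^ ((1:ℝ) / ((p:ℝ) + 1)) := by
        exact mul_le_mul_of_nonneg_left hfinal (Real.rpow_nonneg hcsum_nonneg _)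
    _ = ((A * B⁻¹ ^ (p + 1)).trace) ^ ((p : ℝ) / ((p:ℝ) + 1)) *
        ((A⁻¹ ^ p).trace) ^ ((1 : ℝ) / ((p:ℝ) + 1)) := by rw [tr2]
end

section
/- Let d ≥ 1 be an integer, γ ∈ (0, 1/6] a real number, α := √d/γ, and Z a d×d real symmetric matrix with Z ⪰ (1−5γ)·I. Let c ∈ ℝ be such that αZ − cI is positive definite and tr((αZ − cI)^{−2}) = 1. Then for every vector v ∈ ℝ^d: vᵀ Z⁻¹ v ≤ α · vᵀ (αZ − cI)⁻¹ v ≤ α · λ_min(Z) · vᵀ Z⁻¹ v, where λ_min(Z) is the smallest eigenvalue of Z. -/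
open Matrix

section Aux
variable {n : Type*} [Fintype n] [DecidableEq n]

lemma aux_starEqT (U : Matrix n n ℝ) : star U = Uᵀ := by
  ext i j; simp [Matrix.conjTranspose_apply]

lemma aux_quad (U : Matrix n n ℝ) (f : n → ℝ) (v : n → ℝ) :
    v ⬝ᵥ (U * Matrix.diagonal f * star U) *ᵥ v
      = ∑ i, f i * ((star U *ᵥ v) i) ^ 2 := by
  rw [← Matrix.mulVec_mulVec, ← Matrix.mulVec_mulVec, Matrix.dotProduct_mulVec,
    ← Matrix.mulVec_transpose, ← aux_starEqT]
  simp only [dotProduct, Matrix.mulVec_diagonal]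
  exact Finset.sum_congr rfl fun i _ => by ring

lemma aux_inv (U : Matrix n n ℝ) (hU2 : U * star U = 1) (f : n → ℝ)
    (hf : ∀ i, f i ≠ 0) :
    (U * Matrix.diagonal f * star U)⁻¹
      = U * Matrix.diagonal (fun i => (f i)⁻¹) * star U := by
  have hU1 : star U * U = 1 := mul_eq_one_comm.mp hU2
  apply Matrix.inv_eq_right_inv
  simp only [Matrix.mul_assoc]
  rw [← Matrix.mul_assoc (star U) U, hU1, Matrix.one_mul,
    ← Matrix.mul_assoc (Matrix.diagonal f), Matrix.diagonal_mul_diagonal]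
  have h : (fun i => f i * (f i)⁻¹) = fun _ => (1 : ℝ) :=
    funext fun i => mul_inv_cancel₀ (hf i)
  rw [h, Matrix.diagonal_one, Matrix.one_mul, hU2]

lemma aux_trace (U : Matrix n n ℝ) (hU1 : star U * U = 1) (f : n → ℝ) :
    (U * Matrix.diagonal f * star U).trace = ∑ i, f i := by
  rw [Matrix.trace_mul_cycle, hU1, Matrix.one_mul, Matrix.trace_diagonal]

lemma aux_sq (U : Matrix n n ℝ) (hU1 : star U * U = 1) (f : n → ℝ) :
    (U * Matrix.diagonal f * star U) ^ 2
      = U * Matrix.diagonal (fun i => f i ^ 2) * star U := by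
  rw [pow_two]
  simp only [Matrix.mul_assoc]
  rw [← Matrix.mul_assoc (star U) U, hU1, Matrix.one_mul,
    ← Matrix.mul_assoc (Matrix.diagonal f), Matrix.diagonal_mul_diagonal]
  have h : (fun i => f i * f i) = fun i => f i ^ 2 := funext fun i => (sq (f i)).symm
  rw [h]

lemma aux_quad_single (U : Matrix n n ℝ) (hU1 : star U * U = 1) (f : n → ℝ) (i : n) :
    (U *ᵥ Pi.single i 1) ⬝ᵥ (U * Matrix.diagonal f * star U) *ᵥ (U *ᵥ Pi.single i 1)
      = f i := by
  rw [aux_quad]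
  have hw : star U *ᵥ (U *ᵥ Pi.single i 1) = Pi.single i 1 := by
    rw [Matrix.mulVec_mulVec, hU1, Matrix.one_mulVec]
  rw [hw]
  have : ∀ j, f j * ((Pi.single i 1 : n → ℝ) j) ^ 2 = if j = i then f i else 0 := by
    intro j
    rcases eq_or_ne j i with h | h
    · subst h; simp
    · simp [Pi.single_eq_of_ne h, if_neg h]
  simp only [this, Finset.sum_ite_eq', Finset.mem_univ, if_true]

lemma aux_affine (U : Matrix n n ℝ) (hU2 : U * star U = 1) (f : n → ℝ) (a b : ℝ)
    (A : Matrix n n ℝ) (hA : A = U * Matrix.diagonal f * star U) :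
    a • A - b • (1 : Matrix n n ℝ)
      = U * Matrix.diagonal (fun i => a * f i - b) * star U := by
  have h1 : (1 : Matrix n n ℝ) = U * (1 : Matrix n n ℝ) * star U := by
    rw [Matrix.mul_one, hU2]
  have hdiag : Matrix.diagonal (fun i => a * f i - b)
      = a • Matrix.diagonal f - b • (1 : Matrix n n ℝ) := by
    ext i j
    rcases eq_or_ne i j with h | h
    · subst h; simp [Matrix.one_apply]
    · simp [Matrix.diagonal_apply_ne _ h, Matrix.one_apply_ne h]
  rw [hdiag, hA, h1]
  simp only [Matrix.sub_mul, Matrix.mul_sub, Matrix.smul_mul, Matrix.mul_smul]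
  rw [Matrix.mul_one, hU2]
  congr 1
  rw [Matrix.mul_one, hU2]

end Aux

theorem stmt5 {d : ℕ} (hd : 1 ≤ d) (γ : ℝ) (hγ0 : 0 < γ) (hγ : γ ≤ 1 / 6)
    (Z : Matrix (Fin d) (Fin d) ℝ) (hZh : Z.IsHermitian)
    (hZpsd : (Z - (1 - 5 * γ) • (1 : Matrix (Fin d) (Fin d) ℝ)).PosSemidef)
    (c : ℝ)
    (hc : ((Real.sqrt d / γ) • Z - c • (1 : Matrix (Fin d) (Fin d) ℝ)).PosDef)
    (htr : ((((Real.sqrt d / γ) • Z - c • (1 : Matrix (Fin d) (Fin d) ℝ))⁻¹) ^ 2).trace = 1)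
    (v : Fin d → ℝ) :
    v ⬝ᵥ Z⁻¹ *ᵥ v ≤
      (Real.sqrt d / γ) *
        (v ⬝ᵥ ((Real.sqrt d / γ) • Z - c • (1 : Matrix (Fin d) (Fin d) ℝ))⁻¹ *ᵥ v) ∧
    (Real.sqrt d / γ) *
        (v ⬝ᵥ ((Real.sqrt d / γ) • Z - c • (1 : Matrix (Fin d) (Fin d) ℝ))⁻¹ *ᵥ v) ≤
      (Real.sqrt d / γ) * (⨅ i, hZh.eigenvalues i) * (v ⬝ᵥ Z⁻¹ *ᵥ v) := by
  classical
  haveI : Nonempty (Fin d) := ⟨⟨0, hd⟩⟩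
  set α := Real.sqrt d / γ with hα
  set U : Matrix (Fin d) (Fin d) ℝ := (hZh.eigenvectorUnitary : Matrix (Fin d) (Fin d) ℝ) with hUdef
  have hU2 : U * star U = 1 := Matrix.mem_unitaryGroup_iff.mp hZh.eigenvectorUnitary.2
  have hU1 : star U * U = 1 := Matrix.mem_unitaryGroup_iff'.mp hZh.eigenvectorUnitary.2
  set ev : Fin d → ℝ := hZh.eigenvalues with hevdef
  have hspec : Z = U * Matrix.diagonal ev * star U := by
    simpa using hZh.spectral_theorem
  have hsd : 0 < Real.sqrt d := Real.sqrt_pos.mpr (by exact_mod_cast hd)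
  have hαpos : 0 < α := div_pos hsd hγ0
  set m : Fin d → ℝ := fun i => α * ev i - c with hmdef
  set M : Matrix (Fin d) (Fin d) ℝ := α • Z - c • 1 with hMdef
  have hMspec : M = U * Matrix.diagonal m * star U := aux_affine U hU2 ev α c Z hspec
  -- eigenvalue lower bound
  have hev_lb : ∀ i, 1 - 5 * γ ≤ ev i := by
    intro i
    have hdec : Z - (1 - 5 * γ) • (1 : Matrix (Fin d) (Fin d) ℝ)
        = U * Matrix.diagonal (fun j => 1 * ev j - (1 - 5 * γ)) * star U := by
      have := aux_affine U hU2 ev 1 (1 - 5 * γ) Z hspec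
      rwa [one_smul] at this
    have hx := hZpsd.dotProduct_mulVec_nonneg (U *ᵥ Pi.single i 1)
    rw [hdec] at hx
    have hq := aux_quad_single U hU1 (fun j => 1 * ev j - (1 - 5 * γ)) i
    simp only [star_trivial] at hx
    rw [hq] at hx
    linarith
  have hev_pos : ∀ i, 0 < ev i := fun i => lt_of_lt_of_le (by linarith) (hev_lb i)
  -- m positive
  have hm_pos : ∀ i, 0 < m i := by
    intro i
    have hxne : (U *ᵥ Pi.single i 1 : Fin d → ℝ) ≠ 0 := by
      intro h
      have h2 : star U *ᵥ (U *ᵥ Pi.single i 1) = star U *ᵥ (0 : Fin d → ℝ) := by rw [h]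
      rw [Matrix.mulVec_mulVec, hU1, Matrix.one_mulVec, Matrix.mulVec_zero] at h2
      have := congrFun h2 i
      simp at this
    have hx := hc.dotProduct_mulVec_pos hxne
    rw [hMspec] at hx
    have hq := aux_quad_single U hU1 m i
    simp only [star_trivial] at hx
    rw [hq] at hx
    exact hx
  -- trace identity
  have hMinv : M⁻¹ = U * Matrix.diagonal (fun i => (m i)⁻¹) * star U := by
    rw [hMspec]; exact aux_inv U hU2 m fun i => ne_of_gt (hm_pos i)
  have htr' : ∑ i, ((m i)⁻¹) ^ 2 = 1 := by
    have h2 : (M⁻¹) ^ 2 = U * Matrix.diagonal (fun i => ((m i)⁻¹) ^ 2) * star U := by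
      rw [hMinv]; exact aux_sq U hU1 _
    rw [h2, aux_trace U hU1] at htr
    exact htr
  have hm_ge1 : ∀ i, 1 ≤ m i := by
    intro i
    have h1 : ((m i)⁻¹) ^ 2 ≤ 1 := by
      rw [← htr']
      exact Finset.single_le_sum (f := fun j => ((m j)⁻¹) ^ 2)
        (fun j _ => sq_nonneg _) (Finset.mem_univ i)
    have hx1 : (m i)⁻¹ ≤ 1 := by nlinarith [sq_nonneg ((m i)⁻¹ - 1)]
    have h3 := mul_le_mul_of_nonneg_left hx1 (le_of_lt (hm_pos i))
    rwa [mul_inv_cancel₀ (ne_of_gt (hm_pos i)), mul_one] at h3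
  -- minimum eigenvalue
  obtain ⟨i₀, hi₀⟩ := exists_eq_ciInf_of_finite (f := ev)
  set L := ⨅ i, ev i with hLdef
  have hL_le : ∀ i, L ≤ ev i := fun i => ciInf_le (Finite.bddBelow_range _) i
  have hLpos : 0 < L := hi₀ ▸ hev_pos i₀
  have hL_lb : 1 - 5 * γ ≤ L := hi₀ ▸ hev_lb i₀
  have hmi₀ : m i₀ = α * L - c := by rw [← hi₀]
  have hmin_le : m i₀ ≤ Real.sqrt d := by
    by_contra h
    push_neg at h
    have hall : ∀ i, Real.sqrt d < m i := by
      intro i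
      have hle : ev i₀ ≤ ev i := hi₀ ▸ hL_le i
      have : m i₀ ≤ m i := by
        simp only [hmdef]
        nlinarith
      linarith
    have hterm : ∀ i, ((m i)⁻¹) ^ 2 < 1 / (d : ℝ) := by
      intro i
      have h2 : 0 < (m i)⁻¹ := inv_pos.mpr (hm_pos i)
      have h1 : (m i)⁻¹ < (Real.sqrt d)⁻¹ := by
        rw [inv_lt_inv₀ (hm_pos i) hsd]
        exact hall i
      have h3 : ((m i)⁻¹) ^ 2 < ((Real.sqrt d)⁻¹) ^ 2 := by nlinarith
      have h4 : ((Real.sqrt d)⁻¹) ^ 2 = 1 / (d : ℝ) := by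
        rw [inv_pow, Real.sq_sqrt (by positivity), one_div]
      linarith
    have hlt : (1 : ℝ) < 1 := by
      calc (1 : ℝ) = ∑ i, ((m i)⁻¹) ^ 2 := htr'.symm
        _ < ∑ _i : Fin d, 1 / (d : ℝ) :=
            Finset.sum_lt_sum_of_nonempty Finset.univ_nonempty fun i _ => hterm i
        _ = 1 := by
            rw [Finset.sum_const, Finset.card_univ, Fintype.card_fin, nsmul_eq_mul]
            field_simp
    exact absurd hlt (lt_irrefl 1)
  have hc_ub : c ≤ α * L - 1 := by
    have := hm_ge1 i₀; rw [hmi₀] at this; linarith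
  have hc_lb : α * L - Real.sqrt d ≤ c := by rw [hmi₀] at hmin_le; linarith
  have hc0 : 0 ≤ c := by
    have h6 : γ ≤ 1 - 5 * γ := by linarith
    have h1 : Real.sqrt d ≤ α * (1 - 5 * γ) := by
      rw [hα, div_mul_eq_mul_div, le_div_iff₀ hγ0]
      nlinarith [Real.sqrt_nonneg (d : ℝ)]
    have h2 : α * (1 - 5 * γ) ≤ α * L := mul_le_mul_of_nonneg_left hL_lb (le_of_lt hαpos)
    linarith
  have hαL1 : 1 ≤ α * L := by linarith
  -- quadratic forms
  have hZinv : Z⁻¹ = U * Matrix.diagonal (fun i => (ev i)⁻¹) * star U := by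
    rw [hspec]; exact aux_inv U hU2 ev fun i => ne_of_gt (hev_pos i)
  set w : Fin d → ℝ := star U *ᵥ v with hwdef
  have hQZ : v ⬝ᵥ Z⁻¹ *ᵥ v = ∑ i, (ev i)⁻¹ * (w i) ^ 2 := by
    rw [hZinv]; exact aux_quad U _ v
  have hQM : v ⬝ᵥ M⁻¹ *ᵥ v = ∑ i, (m i)⁻¹ * (w i) ^ 2 := by
    rw [hMinv]; exact aux_quad U _ v
  constructor
  · rw [hQZ, hQM, Finset.mul_sum]
    apply Finset.sum_le_sum
    intro i _
    have h1 : (ev i)⁻¹ ≤ α * (m i)⁻¹ := by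
      rw [← one_div, ← div_eq_mul_inv, div_le_div_iff₀ (hev_pos i) (hm_pos i)]
      have : m i = α * ev i - c := rfl
      nlinarith
    calc (ev i)⁻¹ * w i ^ 2 ≤ (α * (m i)⁻¹) * w i ^ 2 :=
          mul_le_mul_of_nonneg_right h1 (sq_nonneg _)
      _ = α * ((m i)⁻¹ * w i ^ 2) := by ring
  · rw [hQZ, hQM, Finset.mul_sum, Finset.mul_sum]
    apply Finset.sum_le_sum
    intro i _
    have key : ev i ≤ L * m i := by
      have hm_eq : m i = α * ev i - c := rfl
      have h1 : L * c ≤ L * (α * L - 1) := mul_le_mul_of_nonneg_left hc_ub (le_of_lt hLpos)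
      have h2 : 0 ≤ (α * L - 1) * (ev i - L) :=
        mul_nonneg (by linarith) (by linarith [hL_le i])
      nlinarith
    have h1 : (m i)⁻¹ ≤ L * (ev i)⁻¹ := by
      rw [← one_div, ← div_eq_mul_inv, div_le_div_iff₀ (hm_pos i) (hev_pos i)]
      linarith
    calc α * ((m i)⁻¹ * w i ^ 2) ≤ α * ((L * (ev i)⁻¹) * w i ^ 2) := by
          apply mul_le_mul_of_nonneg_left _ (le_of_lt hαpos)
          exact mul_le_mul_of_nonneg_right h1 (sq_nonneg _)
      _ = α * L * ((ev i)⁻¹ * w i ^ 2) := by ring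
end

section
/- Let d ≥ 1 be an integer, γ ∈ (0, 1/6] a real number, α := √d/γ, and Z a d×d real symmetric matrix with Z ⪰ (1−5γ)·I. Let c ∈ ℝ be such that αZ − cI is positive definite and tr((αZ − cI)^{−2}) = 1. Then c ≥ 0 and 1 ≤ α·λ_min(Z) − c ≤ √d, where λ_min(Z) is the smallest eigenvalue of Z. -/
open Matrix

private lemma eig_pos_aux {d : ℕ} (Z : Matrix (Fin d) (Fin d) ℝ) (hZh : Z.IsHermitian)
    (α c : ℝ) (hc : (α • Z - c • (1 : Matrix (Fin d) (Fin d) ℝ)).PosDef) (i : Fin d) :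
    0 < α * hZh.eigenvalues i - c := by
  set v : Fin d → ℝ := ⇑(hZh.eigenvectorBasis i) with hv
  have hvne : v ≠ 0 := by
    intro h
    exact hZh.eigenvectorBasis.orthonormal.ne_zero i (by ext j; exact congrFun h j)
  have hmv : (α • Z - c • (1 : Matrix (Fin d) (Fin d) ℝ)) *ᵥ v
      = (α * hZh.eigenvalues i - c) • v := by
    rw [sub_mulVec, smul_mulVec, hZh.mulVec_eigenvectorBasis, smul_mulVec, one_mulVec]
    ext j
    simp only [Pi.sub_apply, Pi.smul_apply, smul_eq_mul]
    ring
  have h2 := hc.dotProduct_mulVec_pos hvne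
  rw [hmv, dotProduct_smul] at h2
  have hvv : 0 < dotProduct (star v) v := dotProduct_star_self_pos_iff.mpr hvne
  have h3 : 0 < (α * hZh.eigenvalues i - c) * dotProduct (star v) v := h2
  nlinarith [h3, hvv]

private lemma eig_lb_aux {d : ℕ} (Z : Matrix (Fin d) (Fin d) ℝ) (hZh : Z.IsHermitian)
    (a : ℝ) (hZ : (Z - a • (1 : Matrix (Fin d) (Fin d) ℝ)).PosSemidef) (i : Fin d) :
    a ≤ hZh.eigenvalues i := by
  set v : Fin d → ℝ := ⇑(hZh.eigenvectorBasis i) with hv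
  have hvne : v ≠ 0 := by
    intro h
    exact hZh.eigenvectorBasis.orthonormal.ne_zero i (by ext j; exact congrFun h j)
  have hmv : (Z - a • (1 : Matrix (Fin d) (Fin d) ℝ)) *ᵥ v
      = (hZh.eigenvalues i - a) • v := by
    rw [sub_mulVec, hZh.mulVec_eigenvectorBasis, smul_mulVec, one_mulVec]
    ext j
    simp only [Pi.sub_apply, Pi.smul_apply, smul_eq_mul]
    ring
  have h2 := hZ.dotProduct_mulVec_nonneg v
  rw [hmv, dotProduct_smul] at h2
  have hvv : 0 < dotProduct (star v) v := dotProduct_star_self_pos_iff.mpr hvne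
  have h3 : 0 ≤ (hZh.eigenvalues i - a) * dotProduct (star v) v := h2
  nlinarith [h3, hvv]

private lemma trace_aux {d : ℕ} (Z : Matrix (Fin d) (Fin d) ℝ) (hZh : Z.IsHermitian)
    (α c : ℝ) (hpos : ∀ i, 0 < α * hZh.eigenvalues i - c)
    (htr : (((α • Z - c • (1 : Matrix (Fin d) (Fin d) ℝ))⁻¹) ^ 2).trace = 1) :
    ∑ i, ((α * hZh.eigenvalues i - c)⁻¹)^2 = 1 := by
  set U : Matrix (Fin d) (Fin d) ℝ := (hZh.eigenvectorUnitary : Matrix (Fin d) (Fin d) ℝ) with hU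
  have hU1 : U * star U = 1 := mem_unitaryGroup_iff.mp hZh.eigenvectorUnitary.2
  have hU2 : star U * U = 1 := mem_unitaryGroup_iff'.mp hZh.eigenvectorUnitary.2
  set μ : Fin d → ℝ := fun i => α * hZh.eigenvalues i - c with hμ
  have hspec : Z = U * diagonal hZh.eigenvalues * star U := by
    have := hZh.spectral_theorem
    simpa using this
  have key : α • diagonal hZh.eigenvalues - c • (1 : Matrix (Fin d) (Fin d) ℝ)
      = diagonal μ := by
    ext i j
    by_cases h : i = j
    · subst h; simp [hμ]
    · simp [Matrix.diagonal_apply_ne _ h, Matrix.one_apply_ne h]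
  have hM : α • Z - c • (1 : Matrix (Fin d) (Fin d) ℝ) = U * diagonal μ * star U := by
    rw [← key, mul_sub, sub_mul, mul_smul_comm, mul_smul_comm, smul_mul_assoc, smul_mul_assoc,
      mul_one, hU1, ← hspec]
  have hMinv : (α • Z - c • (1 : Matrix (Fin d) (Fin d) ℝ))⁻¹
      = U * diagonal (fun i => (μ i)⁻¹) * star U := by
    apply inv_eq_right_inv
    rw [hM]
    calc U * diagonal μ * star U * (U * diagonal (fun i => (μ i)⁻¹) * star U)
        = U * diagonal μ * (star U * U) * diagonal (fun i => (μ i)⁻¹) * star U := by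
          noncomm_ring
      _ = U * (diagonal μ * diagonal (fun i => (μ i)⁻¹)) * star U := by
          rw [hU2]; noncomm_ring
      _ = 1 := by
          rw [diagonal_mul_diagonal]
          have : (fun i => μ i * (μ i)⁻¹) = fun _ => (1:ℝ) := by
            funext i; exact mul_inv_cancel₀ (hpos i).ne'
          rw [this, diagonal_one, mul_one, hU1]
  rw [hMinv, pow_two] at htr
  rw [show U * diagonal (fun i => (μ i)⁻¹) * star U * (U * diagonal (fun i => (μ i)⁻¹) * star U)
      = U * (diagonal (fun i => (μ i)⁻¹) * diagonal (fun i => (μ i)⁻¹)) * star U by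
        rw [show ∀ A B C E F : Matrix (Fin d) (Fin d) ℝ, A*B*C*(E*F*C) = A*B*(C*E)*F*C by
          intros; noncomm_ring, hU2]; noncomm_ring] at htr
  rw [diagonal_mul_diagonal, trace_mul_comm, ← mul_assoc, hU2, one_mul, trace_diagonal] at htr
  simpa [pow_two] using htr

theorem stmt6 {d : ℕ} (hd : 1 ≤ d) (γ : ℝ) (hγ0 : 0 < γ) (hγ : γ ≤ 1 / 6)
    (Z : Matrix (Fin d) (Fin d) ℝ) (hZh : Z.IsHermitian)
    (hZpsd : (Z - (1 - 5 * γ) • (1 : Matrix (Fin d) (Fin d) ℝ)).PosSemidef)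
    (c : ℝ)
    (hc : ((Real.sqrt d / γ) • Z - c • (1 : Matrix (Fin d) (Fin d) ℝ)).PosDef)
    (htr : ((((Real.sqrt d / γ) • Z - c • (1 : Matrix (Fin d) (Fin d) ℝ))⁻¹) ^ 2).trace = 1) :
    0 ≤ c ∧
    1 ≤ (Real.sqrt d / γ) * (⨅ i, hZh.eigenvalues i) - c ∧
    (Real.sqrt d / γ) * (⨅ i, hZh.eigenvalues i) - c ≤ Real.sqrt d := by
  haveI : Nonempty (Fin d) := ⟨⟨0, hd⟩⟩
  set α : ℝ := Real.sqrt d / γ with hα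
  set lam : Fin d → ℝ := hZh.eigenvalues with hlam
  have hs0 : (0:ℝ) < Real.sqrt d := Real.sqrt_pos.mpr (by exact_mod_cast Nat.pos_of_ne_zero (by omega))
  have hαpos : 0 < α := div_pos hs0 hγ0
  have hpos : ∀ i, 0 < α * lam i - c := eig_pos_aux Z hZh α c hc
  have hsum : ∑ i, ((α * lam i - c)⁻¹)^2 = 1 := trace_aux Z hZh α c hpos htr
  obtain ⟨j, hj⟩ := exists_eq_ciInf_of_finite (f := lam)
  set m : ℝ := ⨅ i, lam i with hm
  have hm_le : ∀ i, m ≤ lam i := fun i => ciInf_le (Finite.bddBelow_range _) i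
  set t : ℝ := α * m - c with htdef
  have htj : t = α * lam j - c := by rw [htdef, hj]
  have ht : 0 < t := htj ▸ hpos j
  -- lower bound: 1 ≤ t
  have h1 : ((α * lam j - c)⁻¹)^2 ≤ 1 := by
    rw [← hsum]
    exact Finset.single_le_sum (f := fun i => ((α * lam i - c)⁻¹)^2)
      (fun i _ => sq_nonneg _) (Finset.mem_univ j)
  have hone : 1 ≤ t := by
    rw [htj]
    set u : ℝ := (α * lam j - c)⁻¹ with hu
    have hμj : 0 < α * lam j - c := hpos j
    have hu0 : 0 < u := inv_pos.mpr hμj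
    have hcancel : (α * lam j - c) * u = 1 := mul_inv_cancel₀ hμj.ne'
    have hu1 : u ≤ 1 := by nlinarith [h1, hu0]
    nlinarith [hcancel, hμj, hu1]
  -- upper bound: t ≤ √d
  have hle : ∀ i, ((α * lam i - c)⁻¹)^2 ≤ (t⁻¹)^2 := by
    intro i
    have h2 : t ≤ α * lam i - c := by
      rw [htdef]
      have := hm_le i
      nlinarith [hαpos]
    have h3 : (α * lam i - c)⁻¹ ≤ t⁻¹ := by
      exact inv_anti₀ ht h2
    have h4 : 0 < (α * lam i - c)⁻¹ := inv_pos.mpr (hpos i)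
    nlinarith [h3, h4]
  have hd_bound : (1:ℝ) ≤ (d:ℝ) * (t⁻¹)^2 := by
    rw [← hsum]
    calc ∑ i, ((α * lam i - c)⁻¹)^2 ≤ ∑ _i : Fin d, (t⁻¹)^2 :=
          Finset.sum_le_sum (fun i _ => hle i)
      _ = (d:ℝ) * (t⁻¹)^2 := by
          rw [Finset.sum_const, Finset.card_univ, Fintype.card_fin, nsmul_eq_mul]
  have htsqrt : t ≤ Real.sqrt d := by
    rw [Real.le_sqrt ht.le (by positivity)]
    have hcancel : t * t⁻¹ = 1 := mul_inv_cancel₀ ht.ne'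
    have h := mul_le_mul_of_nonneg_left hd_bound (sq_nonneg t)
    have h2 : t^2 * ((d:ℝ) * t⁻¹^2) = (d:ℝ) * (t*t⁻¹)^2 := by ring
    rw [h2, hcancel] at h
    simpa using h
  -- c ≥ 0
  have hmlb : 1 - 5 * γ ≤ m := by
    rw [← hj]
    exact eig_lb_aux Z hZh (1 - 5 * γ) hZpsd j
  have hc0 : 0 ≤ c := by
    have hαγ : α * γ = Real.sqrt d := div_mul_cancel₀ _ hγ0.ne'
    have hα0 : 0 ≤ α := hαpos.le
    have h5 : α * (1 - 5*γ) ≤ α * m := mul_le_mul_of_nonneg_left hmlb hα0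
    have h6 : α * m - c ≤ Real.sqrt d := htsqrt
    nlinarith [hαγ, hα0, h5, h6, hγ0, hγ]
  exact ⟨hc0, hone, htsqrt⟩
end

section
/- Let p ≥ 1 be an integer, u_1, …, u_n ∈ ℝ^d vectors, and k > 0 a real number. Suppose x ∈ [0,1]^n is an optimal solution of the convex relaxation: x minimizes y ↦ tr((Σ_{i=1}^{n} y(i)·u_i u_iᵀ)^{−p}) over all y ∈ [0,1]^n with Σ_{i=1}^{n} y(i) ≤ k and Σ_{i=1}^{n} y(i)·u_i u_iᵀ positive definite, and X := Σ_{i=1}^{n} x(i)·u_i u_iᵀ is positive definite. Then for every index i with 0 < x(i) < 1, it holds that u_iᵀ X^{−p−1} u_i ≤ (1/k) · tr(X^{−p}). -/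
open Matrix BigOperators

attribute [local instance] Matrix.linftyOpNormedAddCommGroup Matrix.linftyOpNormedRing
  Matrix.linftyOpNormedAlgebra

lemma aux_deriv_nonneg {f : ℝ → ℝ} {c δ : ℝ} (hδ : 0 < δ)
    (hf : HasDerivAt f c 0) (h : ∀ t ∈ Set.Ioo (0:ℝ) δ, f 0 ≤ f t) : 0 ≤ c := by
  have hf' : HasDerivWithinAt f c (Set.Ioo 0 δ) 0 := hf.hasDerivWithinAt
  rw [hasDerivWithinAt_iff_tendsto_slope] at hf'
  have h0 : (0:ℝ) ∉ Set.Ioo (0:ℝ) δ := by simp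
  rw [Set.diff_singleton_eq_self h0, nhdsWithin_Ioo_eq_nhdsGT hδ] at hf'
  refine ge_of_tendsto hf' ?_
  filter_upwards [Ioo_mem_nhdsGT_of_mem (Set.left_mem_Ico.2 hδ)] with t ht
  have : 0 ≤ f t - f 0 := sub_nonneg.2 (h t ht)
  have ht0 : (0:ℝ) < t := ht.1
  simp only [slope_def_field]
  exact div_nonneg (by linarith) (by linarith [ht.1])

lemma aux_hasDerivAt_pow {d : ℕ} {f : ℝ → Matrix (Fin d) (Fin d) ℝ} {f' : Matrix (Fin d) (Fin d) ℝ}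
    {t : ℝ} (hf : HasDerivAt f f' t) (p : ℕ) :
    HasDerivAt (fun s => f s ^ p)
      (∑ m ∈ Finset.range p, f t ^ m * f' * f t ^ (p - 1 - m)) t := by
  induction p with
  | zero => simp only [pow_zero, Finset.range_zero, Finset.sum_empty]; exact hasDerivAt_const t (1 : Matrix (Fin d) (Fin d) ℝ)
  | succ p ih =>
    have h := ih.mul hf
    simp only [pow_succ]
    refine h.congr_deriv ?_
    rw [Finset.sum_range_succ, Finset.sum_mul]
    congr 1
    · refine Finset.sum_congr rfl fun m hm => ?_
      rw [Finset.mem_range] at hm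
      have h1 : p + 1 - 1 - m = (p - 1 - m) + 1 := by omega
      rw [mul_assoc, h1, pow_succ, ← mul_assoc]
    · simp

lemma aux_main_deriv {d : ℕ} (p : ℕ) (X E : Matrix (Fin d) (Fin d) ℝ) (hX : IsUnit X.det) :
    HasDerivAt (fun t : ℝ => ((X + t • E)⁻¹ ^ p).trace)
      (-(p : ℝ) * ((X⁻¹ ^ (p + 1)) * E).trace) 0 := by
  have hU : IsUnit X := (Matrix.isUnit_iff_isUnit_det X).2 hX
  obtain ⟨xu, hxu⟩ := hU
  have hinv : (↑xu⁻¹ : Matrix (Fin d) (Fin d) ℝ) = X⁻¹ := by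
    rw [Matrix.coe_units_inv, hxu]
  have h1 : HasDerivAt (fun t : ℝ => X + t • E) E 0 := by
    have h := ((hasDerivAt_id (0:ℝ)).smul_const E).const_add X
    simp only [id, one_smul] at h
    exact h
  have h2 : HasFDerivAt Ring.inverse
      (-ContinuousLinearMap.mulLeftRight ℝ _ (↑xu⁻¹) (↑xu⁻¹)) (X + (0:ℝ) • E) := by
    have h0 : X + (0:ℝ) • E = (xu : Matrix (Fin d) (Fin d) ℝ) := by simp [hxu]
    rw [h0]
    exact hasFDerivAt_ringInverse xu
  have h3 : HasDerivAt (fun t : ℝ => Ring.inverse (X + t • E)) (-(X⁻¹ * E * X⁻¹)) 0 := by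
    have h := h2.comp_hasDerivAt 0 h1
    simp only [Function.comp_def, ContinuousLinearMap.neg_apply,
      ContinuousLinearMap.mulLeftRight_apply, hinv] at h
    exact h
  have h3' : HasDerivAt (fun t : ℝ => (X + t • E)⁻¹) (-(X⁻¹ * E * X⁻¹)) 0 := by
    simpa only [Matrix.nonsing_inv_eq_ringInverse] using h3
  have h4 := aux_hasDerivAt_pow h3' p
  simp only [zero_smul, add_zero] at h4
  let L : Matrix (Fin d) (Fin d) ℝ →L[ℝ] ℝ :=
    LinearMap.toContinuousLinearMap (Matrix.traceLinearMap (Fin d) ℝ ℝ)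
  have h5 := (L.hasFDerivAt).comp_hasDerivAt 0 h4
  have hL : ∀ M : Matrix (Fin d) (Fin d) ℝ, L M = M.trace := fun M => rfl
  have key : ∀ m ∈ Finset.range p,
      (X⁻¹ ^ m * -(X⁻¹ * E * X⁻¹) * X⁻¹ ^ (p - 1 - m)).trace
        = -(((X⁻¹ ^ (p + 1)) * E).trace) := by
    intro m hm
    rw [Finset.mem_range] at hm
    rw [Matrix.trace_mul_comm]
    have h6 : X⁻¹ ^ (p - 1 - m) * (X⁻¹ ^ m * -(X⁻¹ * E * X⁻¹))
        = -(X⁻¹ ^ p * E * X⁻¹) := by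
      rw [← mul_assoc, ← pow_add]
      have h7 : p - 1 - m + m = p - 1 := by omega
      rw [h7, mul_neg]
      congr 1
      have h8 : p = (p - 1) + 1 := by omega
      rw [h8, pow_succ]
      noncomm_ring
    rw [h6, Matrix.trace_neg, Matrix.trace_mul_cycle, ← pow_succ']
  have htr : L (∑ m ∈ Finset.range p, X⁻¹ ^ m * -(X⁻¹ * E * X⁻¹) * X⁻¹ ^ (p - 1 - m))
      = -(p : ℝ) * ((X⁻¹ ^ (p + 1)) * E).trace := by
    rw [hL, Matrix.trace_sum, Finset.sum_congr rfl key]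
    simp [Finset.card_range]
  rw [← htr]
  exact h5

lemma aux_trace_vecMulVec {d : ℕ} (M : Matrix (Fin d) (Fin d) ℝ) (a : Fin d → ℝ) :
    (M * vecMulVec a a).trace = a ⬝ᵥ M *ᵥ a := by
  simp only [Matrix.trace, Matrix.diag, Matrix.mul_apply, vecMulVec_apply, dotProduct,
    Matrix.mulVec, Finset.mul_sum, Finset.sum_mul]
  refine Finset.sum_congr rfl fun i _ => Finset.sum_congr rfl fun j _ => by ring

lemma aux_mulVec_vecMulVec {d : ℕ} (a z : Fin d → ℝ) :
    vecMulVec a a *ᵥ z = (a ⬝ᵥ z) • a := by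
  funext i
  simp only [Matrix.mulVec, dotProduct, vecMulVec_apply, Pi.smul_apply, smul_eq_mul,
    Finset.sum_mul, Finset.mul_sum]
  refine Finset.sum_congr rfl fun j _ => by ring

lemma aux_sum_mulVec {d n : ℕ} (A : Fin n → Matrix (Fin d) (Fin d) ℝ) (z : Fin d → ℝ) :
    (∑ j, A j) *ᵥ z = ∑ j, A j *ᵥ z := by
  funext i
  simp only [Matrix.mulVec, dotProduct, Matrix.sum_apply, Finset.sum_apply, Finset.sum_mul]
  exact Finset.sum_comm

lemma aux_quadform {d n : ℕ} (u : Fin n → Fin d → ℝ) (c : Fin n → ℝ) (z : Fin d → ℝ) :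
    z ⬝ᵥ (∑ j, c j • vecMulVec (u j) (u j)) *ᵥ z = ∑ j, c j * (u j ⬝ᵥ z) ^ 2 := by
  rw [aux_sum_mulVec fun j => c j • vecMulVec (u j) (u j)]
  have hds : ∀ (w : Fin n → Fin d → ℝ), z ⬝ᵥ (∑ j, w j) = ∑ j, z ⬝ᵥ w j := by
    intro w
    simp only [dotProduct, Finset.sum_apply, Finset.mul_sum]
    exact Finset.sum_comm
  rw [hds]
  refine Finset.sum_congr rfl fun j _ => ?_
  rw [Matrix.smul_mulVec, aux_mulVec_vecMulVec, dotProduct_smul, dotProduct_smul,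
    dotProduct_comm]
  simp [smul_eq_mul, pow_two]

lemma aux_herm {d n : ℕ} (u : Fin n → Fin d → ℝ) (c : Fin n → ℝ) :
    (∑ j, c j • vecMulVec (u j) (u j)).IsHermitian := by
  show _ = _
  ext a b
  simp [Matrix.conjTranspose_apply, Matrix.sum_apply, vecMulVec_apply, mul_comm]

lemma aux_dir {d n : ℕ} (p : ℕ) (hp : 1 ≤ p)
    (u : Fin n → Fin d → ℝ) (k : ℝ)
    (x v : Fin n → ℝ)
    (hX : (∑ j, x j • vecMulVec (u j) (u j)).PosDef)
    (hopt : ∀ y : Fin n → ℝ, (∀ i, y i ∈ Set.Icc (0 : ℝ) 1) → ∑ i, y i ≤ k →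
      (∑ i, y i • vecMulVec (u i) (u i)).PosDef →
      ((∑ i, x i • vecMulVec (u i) (u i))⁻¹ ^ p).trace ≤
        ((∑ i, y i • vecMulVec (u i) (u i))⁻¹ ^ p).trace)
    (δ : ℝ) (hδ : 0 < δ)
    (hfeas : ∀ t ∈ Set.Ioo (0:ℝ) δ,
      (∀ m, x m + t * v m ∈ Set.Icc (0 : ℝ) 1) ∧ (∑ m, (x m + t * v m)) ≤ k ∧
        (∑ m, (x m + t * v m) • vecMulVec (u m) (u m)).PosDef) :
    (((∑ j, x j • vecMulVec (u j) (u j))⁻¹ ^ (p + 1)) *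
      (∑ m, v m • vecMulVec (u m) (u m))).trace ≤ 0 := by
  set X := ∑ j, x j • vecMulVec (u j) (u j) with hXdef
  set E := ∑ m, v m • vecMulVec (u m) (u m) with hEdef
  have hdet : IsUnit X.det := isUnit_iff_ne_zero.2 (ne_of_gt hX.det_pos)
  have hlin : ∀ t : ℝ, (∑ m, (x m + t * v m) • vecMulVec (u m) (u m)) = X + t • E := by
    intro t
    rw [hXdef, hEdef, Finset.smul_sum, ← Finset.sum_add_distrib]
    refine Finset.sum_congr rfl fun m _ => ?_
    rw [add_smul, smul_smul]
  have hD := aux_main_deriv p X E hdet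
  have h0 : 0 ≤ -(p:ℝ) * ((X⁻¹ ^ (p + 1)) * E).trace := by
    refine aux_deriv_nonneg hδ hD ?_
    intro t ht
    obtain ⟨hf1, hf2, hf3⟩ := hfeas t ht
    have h := hopt (fun m => x m + t * v m) hf1 hf2 (by rw [hlin t] at hf3; rwa [hlin t])
    rw [hlin t] at h
    simpa using h
  have hppos : (0:ℝ) < p := by exact_mod_cast Nat.lt_of_lt_of_le Nat.zero_lt_one hp
  by_contra hcon
  push_neg at hcon
  nlinarith [mul_pos hppos hcon]

theorem stmt7 {d n : ℕ} (p : ℕ) (hp : 1 ≤ p)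
    (u : Fin n → Fin d → ℝ) (k : ℝ) (hk : 0 < k)
    (x : Fin n → ℝ) (hx : ∀ i, x i ∈ Set.Icc (0 : ℝ) 1)
    (hsum : ∑ i, x i ≤ k)
    (hX : (∑ i, x i • vecMulVec (u i) (u i)).PosDef)
    (hopt : ∀ y : Fin n → ℝ, (∀ i, y i ∈ Set.Icc (0 : ℝ) 1) → ∑ i, y i ≤ k →
      (∑ i, y i • vecMulVec (u i) (u i)).PosDef →
      ((∑ i, x i • vecMulVec (u i) (u i))⁻¹ ^ p).trace ≤
        ((∑ i, y i • vecMulVec (u i) (u i))⁻¹ ^ p).trace)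
    (i : Fin n) (hi0 : 0 < x i) (hi1 : x i < 1) :
    u i ⬝ᵥ ((∑ j, x j • vecMulVec (u j) (u j))⁻¹ ^ (p + 1)) *ᵥ u i ≤
      (1 / k) * ((∑ j, x j • vecMulVec (u j) (u j))⁻¹ ^ p).trace := by
  classical
  have hxj0 : ∀ j, 0 ≤ x j := fun j => (hx j).1
  have hxj1 : ∀ j, x j ≤ 1 := fun j => (hx j).2
  set X : Matrix (Fin d) (Fin d) ℝ := ∑ j, x j • vecMulVec (u j) (u j) with hXdef
  have hdet : IsUnit X.det := isUnit_iff_ne_zero.2 (ne_of_gt hX.det_pos)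
  set g : Fin n → ℝ := fun j => u j ⬝ᵥ (X⁻¹ ^ (p+1)) *ᵥ u j with hgdef
  show g i ≤ (1/k) * (X⁻¹ ^ p).trace
  -- nonnegativity of g
  have hgnonneg : ∀ j, 0 ≤ g j := by
    intro j
    have hps : (X⁻¹ ^ (p+1)).PosSemidef := (hX.inv.posSemidef).pow (p+1)
    have h := hps.dotProduct_mulVec_nonneg (u j)
    simpa [hgdef] using h
  -- sum identity
  have hgt : ∑ j, x j * g j = (X⁻¹ ^ p).trace := by
    have h1 : ∀ j, x j * g j = ((X⁻¹ ^ (p+1)) * (x j • vecMulVec (u j) (u j))).trace := by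
      intro j
      rw [Matrix.mul_smul, Matrix.trace_smul, aux_trace_vecMulVec]
      simp [hgdef]
    rw [Finset.sum_congr rfl fun j _ => h1 j, ← Matrix.trace_sum, ← Matrix.mul_sum, ← hXdef]
    congr 1
    rw [pow_succ, mul_assoc, Matrix.nonsing_inv_mul X hdet, mul_one]
  have hTnonneg : 0 ≤ (X⁻¹ ^ p).trace := by
    rw [← hgt]
    exact Finset.sum_nonneg fun j _ => mul_nonneg (hxj0 j) (hgnonneg j)
  -- quadratic form positivity
  have hq : ∀ z : Fin d → ℝ, z ≠ 0 → 0 < ∑ j, x j * (u j ⬝ᵥ z) ^ 2 := by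
    intro z hz
    have h := hX.dotProduct_mulVec_pos hz
    rw [hXdef] at h
    rwa [show star z = z from by simp, aux_quadform] at h
  rcases lt_or_eq_of_le hsum with hlt | heq
  · -- case sum < k : direction Pi.single i 1
    have hδ : 0 < min (1 - x i) (k - ∑ j, x j) := by
      simp only [lt_min_iff]
      constructor <;> [linarith; linarith]
    have hdir := aux_dir p hp u k x (Pi.single i 1) hX hopt _ hδ ?_
    · -- translate conclusion
      have hE : (∑ m, (Pi.single i 1 : Fin n → ℝ) m • vecMulVec (u m) (u m)) = vecMulVec (u i) (u i) := by
        rw [Finset.sum_eq_single i]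
        · simp
        · intro m _ hmi
          simp [Pi.single_eq_of_ne hmi]
        · simp
      rw [hE, aux_trace_vecMulVec] at hdir
      have : g i ≤ 0 := hdir
      have h2 : 0 ≤ (1/k) * (X⁻¹ ^ p).trace := by positivity
      linarith
    · -- feasibility
      intro t ht
      obtain ⟨ht0, ht1⟩ := ht
      have htle1 : t < 1 - x i := lt_of_lt_of_le ht1 (min_le_left _ _)
      have htle2 : t < k - ∑ j, x j := lt_of_lt_of_le ht1 (min_le_right _ _)
      refine ⟨?_, ?_, ?_⟩
      · intro m
        by_cases hmi : m = i
        · subst hmi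
          simp only [Pi.single_eq_same, mul_one]
          exact ⟨by linarith [hxj0 m], by linarith⟩
        · simp only [Pi.single_eq_of_ne hmi, mul_zero, add_zero]
          exact hx m
      · have : ∑ m, (x m + t * (Pi.single i 1 : Fin n → ℝ) m) = (∑ m, x m) + t := by
          rw [Finset.sum_add_distrib]
          congr 1
          rw [← Finset.mul_sum]
          simp [Finset.sum_pi_single]
        rw [this]; linarith
      · refine Matrix.PosDef.of_dotProduct_mulVec_pos (aux_herm u _) fun z hz => ?_
        rw [show star z = z from by simp, aux_quadform]
        refine lt_of_lt_of_le (hq z hz) (Finset.sum_le_sum fun m _ => ?_)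
        have : 0 ≤ t * (Pi.single i 1 : Fin n → ℝ) m * (u m ⬝ᵥ z) ^ 2 := by
          apply mul_nonneg (mul_nonneg ht0.le ?_) (sq_nonneg _)
          rcases eq_or_ne m i with hmi | hmi
          · subst hmi; simp
          · simp [Pi.single_eq_of_ne hmi]
        nlinarith [sq_nonneg (u m ⬝ᵥ z)]
  · -- case sum = k
    by_contra hcon
    push_neg at hcon
    have hkg : (X⁻¹ ^ p).trace < k * g i := by
      have h := mul_lt_mul_of_pos_left hcon hk
      rw [← mul_assoc, mul_one_div, div_self (ne_of_gt hk), one_mul] at h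
      exact h
    have hsum2 : 0 < ∑ j, x j * (g i - g j) := by
      have hexp : ∑ j, x j * (g i - g j) = (∑ j, x j) * g i - ∑ j, x j * g j := by
        rw [Finset.sum_mul, ← Finset.sum_sub_distrib]
        exact Finset.sum_congr rfl fun j _ => by ring
      rw [hexp, heq, hgt]
      linarith
    have hex : ∃ j, 0 < x j * (g i - g j) := by
      by_contra hall
      push_neg at hall
      have : ∑ j, x j * (g i - g j) ≤ 0 := Finset.sum_nonpos fun j _ => hall j
      linarith
    obtain ⟨j, hj⟩ := hex
    have hxj : 0 < x j := by
      rcases (hxj0 j).lt_or_eq with h | h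
      · exact h
      · exfalso
        rw [← h] at hj
        simp at hj
    have hgij : g j < g i := by
      by_contra hge
      push_neg at hge
      nlinarith
    have hji : j ≠ i := by
      intro h
      subst h
      simp at hj
    have hsum_single : ∀ (a : Fin n) (f : Fin n → ℝ),
        ∑ m, (Pi.single a 1 : Fin n → ℝ) m * f m = f a := by
      intro a f
      rw [Finset.sum_eq_single a]
      · simp
      · intro m _ hma
        simp [Pi.single_eq_of_ne hma]
      · simp
    set v : Fin n → ℝ := Pi.single i 1 - Pi.single j 1 with hvdef
    have hvm : ∀ m, v m = (Pi.single i 1 : Fin n → ℝ) m - (Pi.single j 1 : Fin n → ℝ) m := by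
      intro m
      rw [hvdef]
      simp
    have hδ : 0 < min (1 - x i) (x j) := lt_min (by linarith) hxj
    have hdir := aux_dir p hp u k x v hX hopt _ hδ ?_
    · have hE : (∑ m, v m • vecMulVec (u m) (u m))
          = vecMulVec (u i) (u i) - vecMulVec (u j) (u j) := by
        have hterm : ∀ m, v m • vecMulVec (u m) (u m)
            = (Pi.single i 1 : Fin n → ℝ) m • vecMulVec (u m) (u m)
              - (Pi.single j 1 : Fin n → ℝ) m • vecMulVec (u m) (u m) := by
          intro m
          rw [hvm m, sub_smul]
        rw [Finset.sum_congr rfl fun m _ => hterm m, Finset.sum_sub_distrib]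
        congr 1
        · rw [Finset.sum_eq_single i]
          · simp
          · intro m _ hmi
            simp [Pi.single_eq_of_ne hmi]
          · simp
        · rw [Finset.sum_eq_single j]
          · simp
          · intro m _ hmj
            simp [Pi.single_eq_of_ne hmj]
          · simp
      rw [hE, mul_sub, Matrix.trace_sub, aux_trace_vecMulVec, aux_trace_vecMulVec] at hdir
      have : g i - g j ≤ 0 := hdir
      linarith
    · intro t ht
      obtain ⟨ht0, ht1⟩ := ht
      have htle1 : t < 1 - x i := lt_of_lt_of_le ht1 (min_le_left _ _)
      have htle2 : t < x j := lt_of_lt_of_le ht1 (min_le_right _ _)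
      refine ⟨?_, ?_, ?_⟩
      · intro m
        rcases eq_or_ne m i with hmi | hmi
        · subst hmi
          rw [hvm m, Pi.single_eq_same, Pi.single_eq_of_ne (Ne.symm hji)]
          constructor <;> [nlinarith; nlinarith]
        · rcases eq_or_ne m j with hmj | hmj
          · subst hmj
            rw [hvm m, Pi.single_eq_same, Pi.single_eq_of_ne hmi]
            constructor <;> [nlinarith [hxj1 m]; nlinarith [hxj1 m, hxj0 m]]
          · rw [hvm m, Pi.single_eq_of_ne hmi, Pi.single_eq_of_ne hmj]
            simpa using hx m
      · have hzero : ∑ m, (x m + t * v m) = ∑ m, x m := by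
          rw [Finset.sum_add_distrib, ← Finset.mul_sum]
          have : ∑ m, v m = 0 := by
            rw [Finset.sum_congr rfl fun m _ => hvm m, Finset.sum_sub_distrib]
            simp [Finset.sum_pi_single]
          rw [this, mul_zero, add_zero]
        rw [hzero, heq]
      · refine Matrix.PosDef.of_dotProduct_mulVec_pos (aux_herm u _) fun z hz => ?_
        rw [show star z = z from by simp, aux_quadform]
        have hS := hq z hz
        have hsplit : ∑ m, (x m + t * v m) * (u m ⬝ᵥ z) ^ 2
            = (∑ m, x m * (u m ⬝ᵥ z) ^ 2) + t * (u i ⬝ᵥ z) ^ 2 - t * (u j ⬝ᵥ z) ^ 2 := by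
          have h1 : ∑ m, (x m + t * v m) * (u m ⬝ᵥ z) ^ 2
              = ∑ m, (x m * (u m ⬝ᵥ z) ^ 2 + t * (v m * (u m ⬝ᵥ z) ^ 2)) :=
            Finset.sum_congr rfl fun m _ => by ring
          rw [h1, Finset.sum_add_distrib, ← Finset.mul_sum]
          have h2 : ∑ m, v m * (u m ⬝ᵥ z) ^ 2 = (u i ⬝ᵥ z) ^ 2 - (u j ⬝ᵥ z) ^ 2 := by
            rw [Finset.sum_congr rfl fun m _ => by rw [hvm m, sub_mul], Finset.sum_sub_distrib,
              hsum_single, hsum_single]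
          rw [h2]
          ring
        rw [hsplit]
        have hsj : x j * (u j ⬝ᵥ z) ^ 2 ≤ ∑ m, x m * (u m ⬝ᵥ z) ^ 2 :=
          Finset.single_le_sum (f := fun m => x m * (u m ⬝ᵥ z) ^ 2)
            (fun m _ => mul_nonneg (hxj0 m) (sq_nonneg _)) (Finset.mem_univ j)
        nlinarith [mul_nonneg ht0.le (sq_nonneg (u i ⬝ᵥ z)),
          mul_le_mul_of_nonneg_left hsj ht0.le, mul_lt_mul_of_pos_right htle2 hS,
          mul_pos hxj hS, sq_nonneg (u j ⬝ᵥ z)]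
end

section
/- For every real number x > 0 and every integer p ≥ 1, ((1 + p·x)/x) · ( (1/(1+x))^p − 1 + p·x/(1+x) ) ≤ 2·p²·x. -/
lemma keyB (t : ℝ) (h0 : 0 ≤ t) (h1 : t ≤ 1) (n : ℕ) :
    t ^ n ≤ 1 - n * (1 - t) + (n * (n - 1) / 2) * (1 - t) ^ 2 := by
  induction n with
  | zero => norm_num
  | succ n ih =>
    have hc : 0 ≤ (n : ℝ) * ((n : ℝ) - 1) := by
      rcases Nat.eq_zero_or_pos n with h | h
      · simp [h]
      · have : (1 : ℝ) ≤ n := by exact_mod_cast h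
        nlinarith
    have hstep := mul_le_mul_of_nonneg_left ih h0
    have hpow : t ^ (n + 1) = t * t ^ n := by ring
    push_cast
    rw [hpow]
    nlinarith [hstep, mul_nonneg (mul_nonneg hc (sub_nonneg.2 h1)) (sq_nonneg (1 - t))]

theorem stmt9 (x : ℝ) (hx : 0 < x) (p : ℕ) (hp : 1 ≤ p) :
    ((1 + p * x) / x) * ((1 / (1 + x)) ^ p - 1 + p * x / (1 + x)) ≤ 2 * p ^ 2 * x := by
  have h1x : (0:ℝ) < 1 + x := by linarith
  set q : ℝ := (p : ℝ) with hqdef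
  have hq : (1:ℝ) ≤ q := by rw [hqdef]; exact_mod_cast hp
  set t : ℝ := 1 / (1 + x) with htdef
  have ht0 : 0 ≤ t := by positivity
  have ht1 : t ≤ 1 := by
    rw [htdef, div_le_one h1x]; linarith
  have hmt : 1 - t = x / (1 + x) := by
    rw [htdef]; field_simp; ring
  have hB := keyB t ht0 ht1 p
  have htp1 : t ^ p ≤ 1 := pow_le_one₀ ht0 ht1
  clear_value q t
  rw [← hqdef] at hB
  -- rewrite inner term
  have hinner : q * x / (1 + x) = q * (1 - t) := by
    rw [hmt]; ring
  rw [hinner]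
  set A : ℝ := t ^ p - 1 + q * (1 - t) with hAdef
  clear_value A
  have hA1 : A ≤ q * (q - 1) / 2 * (1 - t) ^ 2 := by
    rw [hAdef]; nlinarith [hB]
  have hA2 : A ≤ q * (1 - t) := by
    rw [hAdef]; nlinarith [htp1]
  have hpos : 0 < (1 + q * x) / x := by positivity
  rcases le_or_gt (q * x) 1 with hcase | hcase
  · -- small qx : use quadratic bound
    have h := mul_le_mul_of_nonneg_left hA1 hpos.le
    refine le_trans h ?_
    rw [hmt]
    rw [div_mul_eq_mul_div, div_le_iff₀ hx]
    have h2 : ((1 + q * x) * (q * (q - 1) / 2 * (x / (1 + x)) ^ 2)) =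
        (1 + q * x) * (q * (q - 1) / 2) * x ^ 2 / (1 + x) ^ 2 := by
      field_simp
    rw [h2, div_le_iff₀ (by positivity : (0:ℝ) < (1 + x) ^ 2)]
    have key : (1 + q * x) * (q * (q - 1)) ≤ 4 * q ^ 2 * (1 + x) ^ 2 := by
      nlinarith [sq_nonneg x, mul_pos hx h1x, sq_nonneg (1 + x)]
    nlinarith [sq_nonneg x, mul_pos hx hx]
  · -- large qx : use linear bound
    have h := mul_le_mul_of_nonneg_left hA2 hpos.le
    refine le_trans h ?_
    rw [hmt]
    rw [div_mul_eq_mul_div, div_le_iff₀ hx]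
    have h2 : (1 + q * x) * (q * (x / (1 + x))) = (1 + q * x) * q * x / (1 + x) := by
      field_simp
    rw [h2, div_le_iff₀ h1x]
    nlinarith [mul_pos hx h1x, mul_pos (mul_pos hx hx) hx]
end

section
/- Let p ≥ 1 be an integer, Y a d×d real positive definite matrix, and w ∈ ℝ^d. Then 0 ≤ Σ_{i=1}^{p} C(p,i) · (−1)^{i+1} · (wᵀY⁻¹w)^{i−1} · (wᵀY^{−p−1}w) / (1 + wᵀY⁻¹w)^i ≤ p · wᵀY^{−p−1}w. -/
open Matrix BigOperators

private lemma sum_eq_aux (p : ℕ) (a : ℝ) (ha : 0 < a) :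
    ∑ i ∈ Finset.Icc 1 p, (p.choose i : ℝ) * (-1 : ℝ) ^ (i + 1) * a ^ (i - 1) / (1 + a) ^ i
      = (1 - ((1 + a)⁻¹) ^ p) / a := by
  have h1a : (0:ℝ) < 1 + a := by linarith
  set x : ℝ := -a / (1 + a) with hxdef
  have hterm : ∀ i ∈ Finset.Icc 1 p,
      (p.choose i : ℝ) * (-1 : ℝ) ^ (i + 1) * a ^ (i - 1) / (1 + a) ^ i
        = -(x ^ i * (p.choose i : ℝ)) / a := by
    intro i hi
    obtain ⟨hi1, _⟩ := Finset.mem_Icc.mp hi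
    have hia : a ^ i = a ^ (i - 1) * a := by
      rw [← pow_succ]; congr 1; omega
    rw [hxdef, div_pow, neg_pow a i, hia, pow_succ (-1:ℝ) i]
    field_simp
  rw [Finset.sum_congr rfl hterm]
  have hins : Finset.Icc 0 p = insert 0 (Finset.Icc 1 p) := by
    ext y; simp [Finset.mem_Icc]; omega
  have hbin : ∑ i ∈ Finset.Icc 1 p, x ^ i * (p.choose i : ℝ) = (x + 1) ^ p - 1 := by
    have := add_pow x (1:ℝ) p
    simp only [one_pow, mul_one] at this
    rw [← Nat.Ico_zero_eq_range, Finset.Ico_add_one_right_eq_Icc, hins,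
      Finset.sum_insert (by simp)] at this
    simp at this
    linarith
  have hx1 : x + 1 = (1 + a)⁻¹ := by
    rw [hxdef]; field_simp; ring
  simp only [neg_div]
  rw [Finset.sum_neg_distrib, ← Finset.sum_div, hbin, hx1]
  ring

private lemma T_bounds (p : ℕ) (hp : 1 ≤ p) (a : ℝ) (ha : 0 ≤ a) :
    0 ≤ (∑ i ∈ Finset.Icc 1 p,
        (p.choose i : ℝ) * (-1 : ℝ) ^ (i + 1) * a ^ (i - 1) / (1 + a) ^ i) ∧
    (∑ i ∈ Finset.Icc 1 p,
        (p.choose i : ℝ) * (-1 : ℝ) ^ (i + 1) * a ^ (i - 1) / (1 + a) ^ i) ≤ p := by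
  rcases eq_or_lt_of_le ha with h0 | hpos
  · have hz : ∀ i ∈ Finset.Icc 1 p, i ≠ 1 →
        (p.choose i : ℝ) * (-1 : ℝ) ^ (i + 1) * a ^ (i - 1) / (1 + a) ^ i = 0 := by
      intro i hi hne
      obtain ⟨hi1, _⟩ := Finset.mem_Icc.mp hi
      have : a ^ (i - 1) = 0 := by
        rw [← h0, zero_pow]; omega
      simp [this]
    rw [Finset.sum_eq_single_of_mem 1 (Finset.mem_Icc.mpr ⟨le_refl 1, hp⟩) hz]
    simp [← h0]
  · have h1a : (0:ℝ) < 1 + a := by linarith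
    rw [sum_eq_aux p a hpos]
    have hle1 : ((1 + a)⁻¹) ^ p ≤ 1 := by
      apply pow_le_one₀ (by positivity)
      rw [inv_le_one_iff₀]; right; linarith
    have hbern : 1 - (p : ℝ) * a ≤ ((1 + a)⁻¹) ^ p := by
      have hx : (-2 : ℝ) ≤ -a / (1 + a) := by
        have h1 : a / (1 + a) ≤ 1 := by rw [div_le_one h1a]; linarith
        rw [neg_div]; linarith
      have hb := one_add_mul_le_pow hx p
      have he : 1 + (-a / (1 + a)) = (1 + a)⁻¹ := by field_simp; ring
      rw [he] at hb
      have h2 : a / (1 + a) ≤ a := by rw [div_le_iff₀ h1a]; nlinarith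
      have h3 : (p : ℝ) * (a / (1 + a)) ≤ (p : ℝ) * a :=
        mul_le_mul_of_nonneg_left h2 (by positivity)
      have h4 : (p : ℝ) * (-a / (1 + a)) = -((p : ℝ) * (a / (1 + a))) := by ring
      linarith
    refine ⟨div_nonneg (by linarith) hpos.le, ?_⟩
    rw [div_le_iff₀ hpos]; linarith
theorem stmt10 {d : ℕ} (p : ℕ) (hp : 1 ≤ p)
    (Y : Matrix (Fin d) (Fin d) ℝ) (hY : Y.PosDef) (w : Fin d → ℝ) :
    0 ≤ ∑ i ∈ Finset.Icc 1 p, (p.choose i : ℝ) * (-1 : ℝ) ^ (i + 1) *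
        (w ⬝ᵥ Y⁻¹ *ᵥ w) ^ (i - 1) * (w ⬝ᵥ (Y⁻¹ ^ (p + 1)) *ᵥ w) /
          (1 + w ⬝ᵥ Y⁻¹ *ᵥ w) ^ i ∧
    ∑ i ∈ Finset.Icc 1 p, (p.choose i : ℝ) * (-1 : ℝ) ^ (i + 1) *
        (w ⬝ᵥ Y⁻¹ *ᵥ w) ^ (i - 1) * (w ⬝ᵥ (Y⁻¹ ^ (p + 1)) *ᵥ w) /
          (1 + w ⬝ᵥ Y⁻¹ *ᵥ w) ^ i ≤
      p * (w ⬝ᵥ (Y⁻¹ ^ (p + 1)) *ᵥ w) := by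
  set a := w ⬝ᵥ Y⁻¹ *ᵥ w with hadef
  set b := w ⬝ᵥ (Y⁻¹ ^ (p + 1)) *ᵥ w with hbdef
  have ha : 0 ≤ a := by simpa using hY.inv.posSemidef.dotProduct_mulVec_nonneg w
  have hb : 0 ≤ b := by simpa only [star_trivial] using (hY.inv.posSemidef.pow (p + 1)).dotProduct_mulVec_nonneg w
  have hsum : ∑ i ∈ Finset.Icc 1 p, (p.choose i : ℝ) * (-1 : ℝ) ^ (i + 1) *
        a ^ (i - 1) * b / (1 + a) ^ i
      = b * ∑ i ∈ Finset.Icc 1 p,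
          (p.choose i : ℝ) * (-1 : ℝ) ^ (i + 1) * a ^ (i - 1) / (1 + a) ^ i := by
    rw [Finset.mul_sum]
    exact Finset.sum_congr rfl fun i _ => by ring
  obtain ⟨h1, h2⟩ := T_bounds p hp a ha
  rw [hsum]
  exact ⟨mul_nonneg hb h1, by nlinarith [mul_le_mul_of_nonneg_left h2 hb]⟩
end

section
/- Assume the experimental-design setup and let γ := 1/(6p), α := √d/γ. Suppose λ_min(Z_S) ∈ [1−5γ, 1). Then Σ_{j∈[m]∖S} (x(j)/M) · (1 + α·v_jᵀ A^{1/2} v_j) · (u_jᵀ Y_S^{−p−1} u_j / u_jᵀ Y_S⁻¹ u_j) · ( 1 − 1/(1 + u_jᵀ Y_S⁻¹ u_j)^p ) ≤ (p·α/M) · tr(X · Y_S^{−p−1}) ≤ (p·α·(1−5γ)^{−p−1}/M) · tr(X^{−p}), where the sum is over indices j ∉ S with u_j ≠ 0. -/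
set_option maxHeartbeats 1000000

open Matrix BigOperators

section AuxStmt15

variable {d : ℕ}

private lemma auxTraceNonneg {P : Matrix (Fin d) (Fin d) ℝ} (hP : P.PosSemidef) : 0 ≤ P.trace := by
  have h : ∀ i, 0 ≤ P i i := by
    intro i
    have := hP.dotProduct_mulVec_nonneg (Pi.single i 1)
    simpa [mulVec_single, dotProduct, Pi.single_apply] using this
  exact Finset.sum_nonneg fun i _ => h i

private lemma auxTraceMulNonneg {P Q : Matrix (Fin d) (Fin d) ℝ} (hP : P.PosSemidef)
    (hQ : Q.PosSemidef) : 0 ≤ (P * Q).trace := by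
  obtain ⟨k, v, rfl⟩ := Matrix.posSemidef_iff_eq_sum_vecMulVec.mp hP
  rw [Finset.sum_mul, trace_sum]
  refine Finset.sum_nonneg fun i _ => ?_
  have := hQ.dotProduct_mulVec_nonneg (v i)
  convert this using 1
  simp only [Matrix.trace, diag_apply, mul_apply, vecMulVec_apply, dotProduct, mulVec,
    Finset.mul_sum, star_trivial]
  rw [Finset.sum_comm]
  exact Finset.sum_congr rfl fun a _ => Finset.sum_congr rfl fun b _ => by ring

private lemma auxSymm {P : Matrix (Fin d) (Fin d) ℝ} (hP : P.IsHermitian) (a b : Fin d → ℝ) :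
    a ⬝ᵥ P *ᵥ b = b ⬝ᵥ P *ᵥ a := by
  nth_rewrite 1 [← hP.eq]
  rw [conjTranspose_eq_transpose_of_trivial, dotProduct_mulVec, vecMul_transpose,
    dotProduct_comm]

private lemma auxQuadNonneg {P : Matrix (Fin d) (Fin d) ℝ} (hP : P.PosSemidef) (a : Fin d → ℝ) :
    0 ≤ a ⬝ᵥ P *ᵥ a := by simpa using hP.dotProduct_mulVec_nonneg a

private lemma auxCS {P : Matrix (Fin d) (Fin d) ℝ} (hP : P.PosSemidef) (a b : Fin d → ℝ) :
    (a ⬝ᵥ P *ᵥ b) ^ 2 ≤ (a ⬝ᵥ P *ᵥ a) * (b ⬝ᵥ P *ᵥ b) := by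
  by_cases hb : b ⬝ᵥ P *ᵥ b = 0
  · have hPb : P *ᵥ b = 0 := (hP.dotProduct_mulVec_zero_iff b).mp (by simpa using hb)
    simp [hPb, hb]
  · have hbpos : 0 < b ⬝ᵥ P *ᵥ b := lt_of_le_of_ne (auxQuadNonneg hP b) (Ne.symm hb)
    set qa := a ⬝ᵥ P *ᵥ a with hqa
    set qab := a ⬝ᵥ P *ᵥ b with hqab
    set qb := b ⬝ᵥ P *ᵥ b with hqb
    set t := qab / qb with htdef
    have key : 0 ≤ qa - 2 * t * qab + t ^ 2 * qb := by
      have h0 := auxQuadNonneg hP (a - t • b)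
      have hexp : (a - t • b) ⬝ᵥ P *ᵥ (a - t • b) = qa - 2 * t * qab + t ^ 2 * qb := by
        simp only [mulVec_sub, mulVec_smul, dotProduct_sub, sub_dotProduct, dotProduct_smul,
          smul_dotProduct, smul_eq_mul]
        rw [auxSymm hP.isHermitian b a]
        ring
      linarith [hexp ▸ h0]
    have ht : t * qb = qab := div_mul_cancel₀ _ hb
    have e1 : (qa - 2 * t * qab + t ^ 2 * qb) * qb = (qa * qb - qab ^ 2) := by
      rw [← ht]; ring
    nlinarith [mul_nonneg key hbpos.le, e1]

private lemma auxPSD2 {P : Matrix (Fin d) (Fin d) ℝ} (hH : P.IsHermitian)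
    (h : ∀ x : Fin d → ℝ, 0 ≤ x ⬝ᵥ P *ᵥ x) : P.PosSemidef :=
  PosSemidef.of_dotProduct_mulVec_nonneg hH fun x => by simpa using h x

private lemma auxInvAntitone {P Q : Matrix (Fin d) (Fin d) ℝ} (hP : P.PosDef) (hQ : Q.PosDef)
    (h : (Q - P).PosSemidef) : (P⁻¹ - Q⁻¹).PosSemidef := by
  have hPdet : IsUnit P.det := isUnit_iff_ne_zero.mpr hP.det_pos.ne'
  have hQdet : IsUnit Q.det := isUnit_iff_ne_zero.mpr hQ.det_pos.ne'
  refine auxPSD2 (hP.1.inv.sub hQ.1.inv) fun x => ?_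
  set y := Q⁻¹ *ᵥ x with hy
  set z := P⁻¹ *ᵥ x with hz
  have hQy : Q *ᵥ y = x := by rw [hy, mulVec_mulVec, Matrix.mul_nonsing_inv _ hQdet, one_mulVec]
  have hPz : P *ᵥ z = x := by rw [hz, mulVec_mulVec, Matrix.mul_nonsing_inv _ hPdet, one_mulVec]
  have e1 : x ⬝ᵥ Q⁻¹ *ᵥ x = y ⬝ᵥ Q *ᵥ y := by
    rw [hQy, ← hy, dotProduct_comm]
  have e2 : x ⬝ᵥ P⁻¹ *ᵥ x = z ⬝ᵥ P *ᵥ z := by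
    rw [hPz, ← hz, dotProduct_comm]
  have e3 : y ⬝ᵥ P *ᵥ z = x ⬝ᵥ Q⁻¹ *ᵥ x := by
    rw [hPz, ← hy, dotProduct_comm]
  have cs := auxCS hP.posSemidef y z
  have hyPy : y ⬝ᵥ P *ᵥ y ≤ y ⬝ᵥ Q *ᵥ y := by
    have h' := auxQuadNonneg h y
    have hexp : y ⬝ᵥ (Q - P) *ᵥ y = y ⬝ᵥ Q *ᵥ y - y ⬝ᵥ P *ᵥ y := by
      rw [sub_mulVec, dotProduct_sub]
    linarith [hexp ▸ h']
  rw [sub_mulVec, dotProduct_sub]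
  rw [e3] at cs
  have hq0 : 0 ≤ x ⬝ᵥ Q⁻¹ *ᵥ x := auxQuadNonneg hQ.posSemidef.inv x
  have hp0 : 0 ≤ x ⬝ᵥ P⁻¹ *ᵥ x := auxQuadNonneg hP.posSemidef.inv x
  rcases eq_or_lt_of_le hq0 with hq | hq
  · linarith
  · have hfin : (x ⬝ᵥ Q⁻¹ *ᵥ x) ^ 2 ≤ (x ⬝ᵥ Q⁻¹ *ᵥ x) * (x ⬝ᵥ P⁻¹ *ᵥ x) := by
      calc (x ⬝ᵥ Q⁻¹ *ᵥ x) ^ 2 ≤ (y ⬝ᵥ P *ᵥ y) * (z ⬝ᵥ P *ᵥ z) := cs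
      _ ≤ (y ⬝ᵥ Q *ᵥ y) * (z ⬝ᵥ P *ᵥ z) := by
          exact mul_le_mul_of_nonneg_right hyPy (auxQuadNonneg hP.posSemidef z)
      _ = (x ⬝ᵥ Q⁻¹ *ᵥ x) * (x ⬝ᵥ P⁻¹ *ᵥ x) := by rw [← e1, ← e2]
    nlinarith [hfin, hq]

private lemma auxDiagForm {Z : Matrix (Fin d) (Fin d) ℝ} (hZ : Z.IsHermitian) (a b : ℝ) :
    a • Z + b • (1 : Matrix (Fin d) (Fin d) ℝ) =
      (hZ.eigenvectorUnitary : Matrix (Fin d) (Fin d) ℝ) *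
        diagonal (fun i => a * hZ.eigenvalues i + b) *
        star (hZ.eigenvectorUnitary : Matrix (Fin d) (Fin d) ℝ) := by
  set U := (hZ.eigenvectorUnitary : Matrix (Fin d) (Fin d) ℝ) with hU
  have hU1 : U * star U = 1 := Unitary.coe_mul_star_self _
  have hdiag : a • diagonal (RCLike.ofReal ∘ hZ.eigenvalues) + b • (1 : Matrix (Fin d) (Fin d) ℝ)
      = diagonal (fun i => a * hZ.eigenvalues i + b) := by
    ext i j
    by_cases h : i = j <;>
      simp [diagonal_apply, Matrix.one_apply, h, RCLike.ofReal_real_eq_id]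
  calc a • Z + b • (1 : Matrix (Fin d) (Fin d) ℝ)
      = U * (a • diagonal (RCLike.ofReal ∘ hZ.eigenvalues)
          + b • (1 : Matrix (Fin d) (Fin d) ℝ)) * star U := by
        rw [Matrix.mul_add, Matrix.add_mul, Matrix.mul_smul, Matrix.smul_mul,
          Matrix.mul_smul, Matrix.smul_mul, Matrix.mul_one, hU1,
          show U * diagonal (RCLike.ofReal ∘ hZ.eigenvalues) * star U = Z from hZ.spectral_theorem.symm]
    _ = U * diagonal (fun i => a * hZ.eigenvalues i + b) * star U := by rw [hdiag]

private lemma auxSpectralPSD {Z : Matrix (Fin d) (Fin d) ℝ} (hZ : Z.IsHermitian) (a b : ℝ)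
    (h : ∀ i, 0 ≤ a * hZ.eigenvalues i + b) :
    (a • Z + b • (1 : Matrix (Fin d) (Fin d) ℝ)).PosSemidef := by
  rw [auxDiagForm hZ a b, Matrix.star_eq_conjTranspose]
  exact (PosSemidef.diagonal h).mul_mul_conjTranspose_same _

private lemma auxEigLB {Z : Matrix (Fin d) (Fin d) ℝ} (hZ : Z.IsHermitian) (a b : ℝ)
    (hpsd : (a • Z + b • (1 : Matrix (Fin d) (Fin d) ℝ)).PosSemidef) (i : Fin d) :
    0 ≤ a * hZ.eigenvalues i + b := by
  set w : Fin d → ℝ := ⇑(hZ.eigenvectorBasis i) with hw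
  have hwne : w ≠ 0 := by
    intro hc
    exact hZ.eigenvectorBasis.orthonormal.ne_zero i (by ext j; exact congrFun hc j)
  have hself : 0 < w ⬝ᵥ w := by
    have := (dotProduct_star_self_pos_iff (R := ℝ) (v := w)).mpr hwne
    simpa using this
  have hmv : (a • Z + b • (1 : Matrix (Fin d) (Fin d) ℝ)) *ᵥ w
      = (a * hZ.eigenvalues i + b) • w := by
    rw [add_mulVec, smul_mulVec, smul_mulVec, one_mulVec,
      hZ.mulVec_eigenvectorBasis, ← hw, smul_smul, ← add_smul]
  have h2 := hpsd.dotProduct_mulVec_nonneg w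
  rw [hmv] at h2
  simp only [dotProduct_smul, star_trivial, smul_eq_mul] at h2
  by_contra hcon
  push_neg at hcon
  nlinarith [h2, hself, hcon]

private lemma auxEigGe1 {N : Matrix (Fin d) (Fin d) ℝ} (hN : N.PosDef)
    (htr : ((N⁻¹)^2).trace = 1) : ∀ i, 1 ≤ hN.1.eigenvalues i := by
  set U := (hN.1.eigenvectorUnitary : Matrix (Fin d) (Fin d) ℝ) with hUdef
  set lam := hN.1.eigenvalues with hlam
  have hUU : star U * U = 1 := Unitary.coe_star_mul_self _
  have hUU' : U * star U = 1 := Unitary.coe_mul_star_self _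
  have hlampos : ∀ i, 0 < lam i := hN.eigenvalues_pos
  have hco : (RCLike.ofReal ∘ lam : Fin d → ℝ) = lam := by
    funext i; simp [RCLike.ofReal_real_eq_id]
  have hD : N = U * diagonal lam * star U := by
    have h : N = U * diagonal (RCLike.ofReal ∘ lam) * star U := hN.1.spectral_theorem
    rwa [hco] at h
  set E := diagonal (fun i => (lam i)⁻¹) with hE
  have hDE : diagonal lam * E = 1 := by
    rw [hE, diagonal_mul_diagonal]
    have hfun : (fun i => lam i * (lam i)⁻¹) = fun _ => (1:ℝ) :=
      funext fun i => mul_inv_cancel₀ (hlampos i).ne'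
    rw [hfun]
    exact diagonal_one
  have hNinv : N⁻¹ = U * E * star U := by
    apply inv_eq_right_inv
    rw [hD]
    have h1 : U * diagonal lam * star U * (U * E * star U)
        = U * diagonal lam * (star U * U) * E * star U := by
      simp only [Matrix.mul_assoc]
    rw [h1, hUU, Matrix.mul_one]
    rw [Matrix.mul_assoc U (diagonal lam) E, hDE, Matrix.mul_one]
    exact hUU'
  have hsq : (N⁻¹)^2 = U * (E*E) * star U := by
    rw [hNinv, pow_two]
    have h1 : U * E * star U * (U * E * star U)
        = U * E * (star U * U) * E * star U := by
      simp only [Matrix.mul_assoc]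
    rw [h1, hUU, Matrix.mul_one]
    simp only [Matrix.mul_assoc]
  have htrE : ((N⁻¹)^2).trace = ∑ i, (lam i)⁻¹ * (lam i)⁻¹ := by
    rw [hsq, trace_mul_cycle, ← Matrix.mul_assoc, hUU, Matrix.one_mul, hE,
      diagonal_mul_diagonal, trace_diagonal]
  intro i
  have hsum : ∑ j, (lam j)⁻¹ * (lam j)⁻¹ = 1 := by rw [← htrE, htr]
  have hle : (lam i)⁻¹ * (lam i)⁻¹ ≤ 1 := by
    rw [← hsum]
    apply Finset.single_le_sum (fun j _ => mul_self_nonneg _) (Finset.mem_univ i)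
  have ha : 0 < (lam i)⁻¹ := inv_pos.mpr (hlampos i)
  have hal : (lam i)⁻¹ * lam i = 1 := inv_mul_cancel₀ (hlampos i).ne'
  nlinarith [hle, ha, hal, hlampos i]

private lemma auxPowIneq (t : ℝ) (ht : 0 ≤ t) : ∀ n : ℕ, (1+t)^(n+1) - 1 ≤ (n+1) * t * (1+t)^n := by
  intro n
  induction n with
  | zero => simp
  | succ n ih =>
    have h1 : (0:ℝ) < 1 + t := by linarith
    have h2 : (1:ℝ) ≤ (1+t)^(n+1) := one_le_pow₀ (by linarith)
    have e : (1+t)^(n+2) - 1 = (1+t)*((1+t)^(n+1) - 1) + t := by ring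
    rw [e]
    have hmul : (1+t)*((1+t)^(n+1) - 1) ≤ (1+t)*((n+1)*t*(1+t)^n) :=
      mul_le_mul_of_nonneg_left ih h1.le
    have e2 : (1+t)*(((n:ℝ)+1)*t*(1+t)^n) = ((n:ℝ)+1)*t*(1+t)^(n+1) := by ring
    have h3 : t ≤ t*(1+t)^(n+1) := le_mul_of_one_le_right ht h2
    push_cast
    nlinarith [hmul, e2, h3]

private lemma auxScalar (p : ℕ) (hp : 1 ≤ p) (α t : ℝ) (hα : 1 ≤ α) (ht : 0 < t) :
    (1 + α*t) * (1 - 1/(1+t)^p) ≤ p * α * t := by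
  obtain ⟨n, rfl⟩ := Nat.exists_eq_add_of_le hp
  set q := 1 + t with hqdef
  have hq : (1:ℝ) < q := by simp [hqdef]; linarith
  have hq0 : (0:ℝ) < q := by linarith
  have hQ : (0:ℝ) < q^(1+n) := pow_pos hq0 _
  have hqn : (0:ℝ) < q^n := pow_pos hq0 _
  have hQ1 : (1:ℝ) ≤ q^(1+n) := one_le_pow₀ hq.le
  have hfrac : 0 ≤ 1 - 1/q^(1+n) := by
    have : 1/q^(1+n) ≤ 1 := by
      rw [div_le_one hQ]; exact hQ1
    linarith
  have pow_ineq : q^(1+n) - 1 ≤ (1+n) * t * q^n := by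
    have hpi := auxPowIneq t ht.le n
    have e : n + 1 = 1 + n := by omega
    rw [e] at hpi
    calc q^(1+n) - 1 ≤ ((n:ℝ)+1) * t * q^n := by rw [hqdef]; exact_mod_cast hpi
    _ = (1+(n:ℝ)) * t * q^n := by ring
  have key2 : q * (1 - 1/q^(1+n)) ≤ (1+n)*t := by
    have e : q * (1 - 1/q^(1+n)) = (q^(1+n) - 1)/q^n := by
      field_simp
      ring
    rw [e, div_le_iff₀ hqn]
    push_cast
    push_cast at pow_ineq
    linarith [pow_ineq]
  have step1 : (1 + α*t) * (1 - 1/q^(1+n)) ≤ (α*q) * (1 - 1/q^(1+n)) := by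
    apply mul_le_mul_of_nonneg_right _ hfrac
    have e : α * q = α + α * t := by rw [hqdef]; ring
    nlinarith [hα]
  have step2 : (α*q) * (1 - 1/q^(1+n)) = α * (q * (1 - 1/q^(1+n))) := by ring
  have step3 : α * (q * (1 - 1/q^(1+n))) ≤ α * ((1+n)*t) :=
    mul_le_mul_of_nonneg_left key2 (by linarith)
  push_cast
  calc (1 + α*t) * (1 - 1/q^(1+n)) ≤ α * ((1+(n:ℝ))*t) := by linarith [step1, step2 ▸ step3]
  _ = (1+(n:ℝ)) * α * t := by ring

private lemma auxVecMulVec {W : Matrix (Fin d) (Fin d) ℝ} (hWs : W.IsHermitian) (u : Fin d → ℝ) :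
    vecMulVec (W *ᵥ u) (W *ᵥ u) = W * vecMulVec u u * W := by
  have hs : ∀ a b, W a b = W b a := by
    intro a b
    conv_lhs => rw [← hWs.eq]
    simp [conjTranspose_apply]
  ext i j
  simp only [vecMulVec_apply, mulVec, dotProduct, mul_apply]
  rw [Finset.sum_mul_sum]
  rw [Finset.sum_comm]
  apply Finset.sum_congr rfl
  intro b _
  rw [Finset.sum_mul]
  apply Finset.sum_congr rfl
  intro a _
  rw [hs j b]
  ring

private lemma auxConjQuad {W A : Matrix (Fin d) (Fin d) ℝ} (hWs : W.IsHermitian) (u : Fin d → ℝ) :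
    u ⬝ᵥ (W * A * W) *ᵥ u = (W *ᵥ u) ⬝ᵥ A *ᵥ (W *ᵥ u) := by
  have hWt : Wᵀ = W := by rw [← conjTranspose_eq_transpose_of_trivial, hWs.eq]
  have hvm : u ᵥ* W = W *ᵥ u := by
    nth_rewrite 1 [← hWt]
    rw [vecMul_transpose]
  calc u ⬝ᵥ (W * A * W) *ᵥ u = u ⬝ᵥ W *ᵥ (A *ᵥ (W *ᵥ u)) := by
        rw [mulVec_mulVec, mulVec_mulVec]
  _ = (u ᵥ* W) ⬝ᵥ (A *ᵥ (W *ᵥ u)) := dotProduct_mulVec _ _ _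
  _ = (W *ᵥ u) ⬝ᵥ A *ᵥ (W *ᵥ u) := by rw [hvm]

private lemma auxTraceVecMulVec (B : Matrix (Fin d) (Fin d) ℝ) (u : Fin d → ℝ) :
    (vecMulVec u u * B).trace = u ⬝ᵥ B *ᵥ u := by
  unfold Matrix.trace
  simp only [diag_apply, mul_apply, vecMulVec_apply, dotProduct, mulVec]
  rw [Finset.sum_comm]
  apply Finset.sum_congr rfl
  intro a _
  rw [Finset.mul_sum]
  apply Finset.sum_congr rfl
  intro b _
  ring

private lemma auxCongPD {P B : Matrix (Fin d) (Fin d) ℝ} (hP : P.PosDef) (hB : B.IsHermitian)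
    (hdet : IsUnit B.det) : (B * P * B).PosDef := by
  refine PosDef.of_dotProduct_mulVec_pos ?_ ?_
  · have : (B * P * B)ᴴ = Bᴴ * Pᴴ * Bᴴ := by
      rw [conjTranspose_mul, conjTranspose_mul, Matrix.mul_assoc]
    rw [Matrix.IsHermitian, this, hB.eq, hP.1.eq]
  · intro x hx
    have hinj : Function.Injective (fun y => B *ᵥ y) :=
      Matrix.mulVec_injective_iff_isUnit.mpr (isUnit_iff_isUnit_det B |>.mpr hdet)
    have hBx : B *ᵥ x ≠ 0 := by
      intro hc
      apply hx
      have : B *ᵥ x = B *ᵥ 0 := by simpa using hc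
      exact hinj this
    have hq := hP.dotProduct_mulVec_pos hBx
    have e : x ⬝ᵥ (B * P * B) *ᵥ x = (B *ᵥ x) ⬝ᵥ P *ᵥ (B *ᵥ x) := auxConjQuad hB x
    simpa [e] using hq

end AuxStmt15

section AuxCalc15

variable {d : ℕ}

attribute [local instance] Matrix.linftyOpNormedRing Matrix.linftyOpNormedAlgebra

private noncomputable def trCLM15 (d : ℕ) : Matrix (Fin d) (Fin d) ℝ →L[ℝ] ℝ :=
  LinearMap.toContinuousLinearMap (Matrix.traceLinearMap (Fin d) ℝ ℝ)

private lemma auxHasDeriv (B Δ : Matrix (Fin d) (Fin d) ℝ) (n : ℕ) (t : ℝ) :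
    HasDerivAt (fun s : ℝ => (B + s • Δ) ^ n)
      (∑ i ∈ Finset.range n, (B + t • Δ) ^ i * Δ * (B + t • Δ) ^ (n - 1 - i)) t := by
  induction n with
  | zero =>
    simp only [pow_zero, Finset.range_zero, Finset.sum_empty]
    exact hasDerivAt_const t (1 : Matrix (Fin d) (Fin d) ℝ)
  | succ n ih =>
    have hf : HasDerivAt (fun s : ℝ => B + s • Δ) Δ t := by
      exact (((hasDerivAt_id t).smul_const Δ).const_add B).congr_deriv (one_smul ℝ Δ)
    have hmul := hf.mul ih
    have heq : (fun s : ℝ => (B + s • Δ) * (B + s • Δ) ^ n)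
        = fun s : ℝ => (B + s • Δ) ^ (n + 1) := by
      funext s; rw [← pow_succ']
    rw [show ((fun s : ℝ => B + s • Δ) * fun s : ℝ => (B + s • Δ) ^ n) = _ from heq] at hmul
    refine HasDerivAt.congr_deriv hmul ?_
    symm
    rw [Finset.sum_range_succ', add_comm]
    congr 1
    · simp
    · rw [Finset.mul_sum]
      apply Finset.sum_congr rfl
      intro i hi
      rw [pow_succ']
      have h1 : n + 1 - 1 - (i + 1) = n - 1 - i := by omega
      rw [h1, Matrix.mul_assoc, Matrix.mul_assoc, Matrix.mul_assoc]

private lemma auxPathPSD {B C : Matrix (Fin d) (Fin d) ℝ} (hB : B.PosSemidef) (hC : C.PosSemidef)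
    {t : ℝ} (ht : t ∈ Set.Icc (0:ℝ) 1) : (B + t • (C - B)).PosSemidef := by
  have hsm : ∀ (r : ℝ) (P : Matrix (Fin d) (Fin d) ℝ), P.IsHermitian → (r • P).IsHermitian := by
    intro r P hP
    unfold Matrix.IsHermitian at *
    rw [conjTranspose_smul, hP, star_trivial]
  have hkey : B + t • (C - B) = (1 - t) • B + t • C := by
    rw [smul_sub, sub_smul, one_smul]; abel
  rw [hkey]
  have h1 : ((1 - t) • B).PosSemidef :=
    PosSemidef.of_dotProduct_mulVec_nonneg (hsm _ _ hB.1) fun x => by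
      rw [smul_mulVec, dotProduct_smul, smul_eq_mul]
      exact mul_nonneg (by linarith [ht.2]) (hB.dotProduct_mulVec_nonneg x)
  have h2 : (t • C).PosSemidef :=
    PosSemidef.of_dotProduct_mulVec_nonneg (hsm _ _ hC.1) fun x => by
      rw [smul_mulVec, dotProduct_smul, smul_eq_mul]
      exact mul_nonneg ht.1 (hC.dotProduct_mulVec_nonneg x)
  exact h1.add h2

private lemma auxTracePowMono {B C : Matrix (Fin d) (Fin d) ℝ} (hB : B.PosSemidef)
    (hC : C.PosSemidef) (h : (C - B).PosSemidef) (k : ℕ) : (B ^ k).trace ≤ (C ^ k).trace := by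
  set Δ := C - B with hΔ
  set f : ℝ → ℝ := fun s : ℝ => ((B + s • Δ) ^ k).trace with hfdef
  have hder : ∀ t : ℝ, HasDerivAt f
      ((∑ i ∈ Finset.range k, (B + t • Δ) ^ i * Δ * (B + t • Δ) ^ (k - 1 - i)).trace) t := by
    intro t
    exact (trCLM15 d).hasFDerivAt.comp_hasDerivAt t (auxHasDeriv B Δ k t)
  have hval : ∀ t ∈ Set.Icc (0:ℝ) 1,
      0 ≤ (∑ i ∈ Finset.range k, (B + t • Δ) ^ i * Δ * (B + t • Δ) ^ (k - 1 - i)).trace := by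
    intro t ht
    rw [Matrix.trace_sum]
    apply Finset.sum_nonneg
    intro i hi
    rw [Matrix.mul_assoc, trace_mul_comm, Matrix.mul_assoc]
    have hM := auxPathPSD hB hC ht
    have hpw : ((B + t • Δ) ^ (k - 1 - i) * (B + t • Δ) ^ i) = (B + t • Δ) ^ (k - 1) := by
      rw [← pow_add]
      congr 1
      have := Finset.mem_range.mp hi
      omega
    rw [hpw]
    exact auxTraceMulNonneg h (hM.pow _)
  have hmono : MonotoneOn f (Set.Icc 0 1) := by
    apply monotoneOn_of_deriv_nonneg (convex_Icc 0 1)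
    · exact (Differentiable.continuous fun t => (hder t).differentiableAt).continuousOn
    · intro x hx
      exact (hder x).differentiableAt.differentiableWithinAt
    · intro x hx
      rw [interior_Icc] at hx
      rw [(hder x).deriv]
      exact hval x ⟨hx.1.le, hx.2.le⟩
  have h0 : f 0 = (B ^ k).trace := by simp [hfdef]
  have h1 : f 1 = (C ^ k).trace := by
    have hBD : B + Δ = C := by rw [hΔ]; abel
    simp only [hfdef, one_smul, hBD]
  have hfin := hmono (Set.left_mem_Icc.mpr zero_le_one) (Set.right_mem_Icc.mpr zero_le_one)
    zero_le_one
  rw [h0, h1] at hfin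
  exact hfin

end AuxCalc15

open scoped Classical in
theorem stmt15 {d m : ℕ} (hd : 0 < d) (hm : 0 < m) (p : ℕ) (hp : 1 ≤ p)
    (u : Fin m → Fin d → ℝ)
    (x : Fin m → ℝ) (hx : ∀ i, x i ∈ Set.Icc (0 : ℝ) 1)
    (X : Matrix (Fin d) (Fin d) ℝ) (hXdef : X = ∑ i, x i • vecMulVec (u i) (u i))
    (hX : X.PosDef)
    -- W is the inverse square root X^{-1/2}
    (W : Matrix (Fin d) (Fin d) ℝ) (hW : W.PosDef) (hW2 : W * W = X⁻¹)
    (v : Fin m → Fin d → ℝ) (hv : ∀ i, v i = W *ᵥ u i)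
    (S : Finset (Fin m))
    (Y Z : Matrix (Fin d) (Fin d) ℝ)
    (hY : Y = ∑ i ∈ S, vecMulVec (u i) (u i))
    (hZ : Z = ∑ i ∈ S, vecMulVec (v i) (v i))
    (M : ℝ) (hM : 0 < M)
    (γ α : ℝ) (hγ : γ = 1 / (6 * p)) (hα : α = Real.sqrt d / γ)
    (c : ℝ) (hc : (α • Z - c • (1 : Matrix (Fin d) (Fin d) ℝ)).PosDef)
    (htrc : (((α • Z - c • (1 : Matrix (Fin d) (Fin d) ℝ))⁻¹) ^ 2).trace = 1)
    (A : Matrix (Fin d) (Fin d) ℝ)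
    (hA : A = (α • Z - c • (1 : Matrix (Fin d) (Fin d) ℝ))⁻¹)
    (hZh : Z.IsHermitian)
    (hmin : 1 - 5 * γ ≤ ⨅ i, hZh.eigenvalues i)
    (hmax : (⨅ i, hZh.eigenvalues i) < 1) :
    ∑ j ∈ Sᶜ.filter (fun j => u j ≠ 0), (x j / M) * (1 + α * (v j ⬝ᵥ A *ᵥ v j)) *
        ((u j ⬝ᵥ (Y⁻¹ ^ (p + 1)) *ᵥ u j) / (u j ⬝ᵥ Y⁻¹ *ᵥ u j)) *
        (1 - 1 / (1 + u j ⬝ᵥ Y⁻¹ *ᵥ u j) ^ p) ≤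
      ((p : ℝ) * α / M) * (X * (Y⁻¹ ^ (p + 1))).trace ∧
    ((p : ℝ) * α / M) * (X * (Y⁻¹ ^ (p + 1))).trace ≤
      ((p : ℝ) * α / ((1 - 5 * γ) ^ (p + 1) * M)) * (X⁻¹ ^ p).trace := by
  haveI : Nonempty (Fin d) := ⟨⟨0, hd⟩⟩
  have hp0 : (0:ℝ) < p := by exact_mod_cast hp
  have hγpos : 0 < γ := by rw [hγ]; positivity
  have hp1 : (1:ℝ) ≤ p := by exact_mod_cast hp
  have hγle : γ ≤ 1/6 := by
    rw [hγ, div_le_div_iff₀ (by positivity) (by norm_num)]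
    nlinarith [hp1]
  set β := 1 - 5*γ with hβ
  have hβpos : 0 < β := by rw [hβ]; linarith
  have hsd : (1:ℝ) ≤ Real.sqrt d := by
    rw [show (1:ℝ) = Real.sqrt 1 by simp]
    apply Real.sqrt_le_sqrt
    exact_mod_cast hd
  have hα1 : 1 ≤ α := by
    rw [hα, le_div_iff₀ hγpos]
    nlinarith
  have hαpos : 0 < α := lt_of_lt_of_le one_pos hα1
  -- eigenvalues of Z
  set lmin := ⨅ i, hZh.eigenvalues i with hlmin
  have hbdd : BddBelow (Set.range fun i => hZh.eigenvalues i) := Finite.bddBelow_range _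
  have hlmin_le : ∀ i, lmin ≤ hZh.eigenvalues i := fun i => ciInf_le hbdd i
  have heigβ : ∀ i, β ≤ hZh.eigenvalues i := fun i => le_trans hmin (hlmin_le i)
  obtain ⟨i0, -, hi0⟩ := Finset.exists_min_image Finset.univ (fun i => hZh.eigenvalues i)
    Finset.univ_nonempty
  have hlmin_eq : lmin = hZh.eigenvalues i0 :=
    le_antisymm (ciInf_le hbdd i0) (le_ciInf fun j => hi0 j (Finset.mem_univ j))
  have hZβ : (Z - β • (1 : Matrix (Fin d) (Fin d) ℝ)).PosSemidef := by
    have h := auxSpectralPSD hZh 1 (-β) (fun i => by have := heigβ i; linarith)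
    have e : (1:ℝ) • Z + (-β) • (1 : Matrix (Fin d) (Fin d) ℝ)
        = Z - β • (1 : Matrix (Fin d) (Fin d) ℝ) := by module
    rwa [e] at h
  have hZpd : Z.PosDef := by
    refine PosDef.of_dotProduct_mulVec_pos hZh fun y hy => ?_
    have h1 := hZβ.dotProduct_mulVec_nonneg y
    have hyy : 0 < y ⬝ᵥ y := by
      have := (dotProduct_star_self_pos_iff (R := ℝ) (v := y)).mpr hy
      simpa using this
    have hexp : y ⬝ᵥ (Z - β • (1 : Matrix (Fin d) (Fin d) ℝ)) *ᵥ y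
        = y ⬝ᵥ Z *ᵥ y - β * (y ⬝ᵥ y) := by
      rw [sub_mulVec, dotProduct_sub, smul_mulVec, dotProduct_smul, one_mulVec,
        smul_eq_mul]
    simp only [star_trivial] at h1 ⊢
    rw [hexp] at h1
    nlinarith [h1, hyy, hβpos]
  have hWH := hW.isHermitian
  have hWdet : IsUnit W.det := isUnit_iff_ne_zero.mpr hW.det_pos.ne'
  have hXdet : IsUnit X.det := isUnit_iff_ne_zero.mpr hX.det_pos.ne'
  have hZWYW : Z = W * Y * W := by
    rw [hZ, hY, Finset.mul_sum, Finset.sum_mul]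
    apply Finset.sum_congr rfl
    intro i _
    rw [hv i]
    exact auxVecMulVec hWH (u i)
  have hWinvH : (W⁻¹).IsHermitian := hWH.inv
  have hWinvdet : IsUnit (W⁻¹).det := W.isUnit_nonsing_inv_det hWdet
  have hYeq : Y = W⁻¹ * Z * W⁻¹ := by
    rw [hZWYW]
    simp only [Matrix.mul_assoc]
    rw [Matrix.mul_nonsing_inv _ hWdet, Matrix.mul_one, ← Matrix.mul_assoc,
      Matrix.nonsing_inv_mul _ hWdet, Matrix.one_mul]
  have hYpd : Y.PosDef := by
    rw [hYeq]
    exact auxCongPD hZpd hWinvH hWinvdet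
  have hYdet : IsUnit Y.det := isUnit_iff_ne_zero.mpr hYpd.det_pos.ne'
  have hYinvpd : (Y⁻¹).PosDef := hYpd.inv
  have hYinv : Y⁻¹ = W * Z⁻¹ * W := by
    have h1 : Z⁻¹ = W⁻¹ * (Y⁻¹ * W⁻¹) := by
      rw [hZWYW, Matrix.mul_inv_rev, Matrix.mul_inv_rev]
    rw [h1, ← Matrix.mul_assoc, ← Matrix.mul_assoc, Matrix.mul_nonsing_inv _ hWdet,
      Matrix.one_mul, Matrix.mul_assoc, Matrix.nonsing_inv_mul _ hWdet, Matrix.mul_one]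
  -- facts about N := α • Z - c • 1 and A
  have hApd : A.PosDef := by rw [hA]; exact hc.inv
  have hNeig : ∀ i, 1 ≤ hc.1.eigenvalues i := auxEigGe1 hc htrc
  have hN1 : ((α • Z - c • (1 : Matrix (Fin d) (Fin d) ℝ))
      - (1 : Matrix (Fin d) (Fin d) ℝ)).PosSemidef := by
    have h := auxSpectralPSD hc.1 1 (-1) (fun i => by have := hNeig i; linarith)
    have e : (1:ℝ) • (α • Z - c • (1 : Matrix (Fin d) (Fin d) ℝ))
        + (-1 : ℝ) • (1 : Matrix (Fin d) (Fin d) ℝ)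
        = (α • Z - c • (1 : Matrix (Fin d) (Fin d) ℝ)) - 1 := by module
    rwa [e] at h
  have hc1 : c + 1 ≤ α * lmin := by
    have h2 : (α • Z + (-(c+1)) • (1 : Matrix (Fin d) (Fin d) ℝ)).PosSemidef := by
      have e : α • Z + (-(c+1)) • (1 : Matrix (Fin d) (Fin d) ℝ)
          = (α • Z - c • (1 : Matrix (Fin d) (Fin d) ℝ)) - 1 := by module
      rw [e]
      exact hN1
    have h3 := auxEigLB hZh α (-(c+1)) h2 i0
    rw [hlmin_eq]
    linarith
  have hNZ : ((α • Z - c • (1 : Matrix (Fin d) (Fin d) ℝ)) - Z).PosSemidef := by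
    have h := auxSpectralPSD hZh (α-1) (-c) (fun i => by
      have h1 : (α-1)*lmin ≤ (α-1)*hZh.eigenvalues i :=
        mul_le_mul_of_nonneg_left (hlmin_le i) (by linarith)
      have hmax' : lmin < 1 := hmax
      nlinarith [hc1, h1, hmax'])
    have e : (α - 1) • Z + (-c) • (1 : Matrix (Fin d) (Fin d) ℝ)
        = (α • Z - c • (1 : Matrix (Fin d) (Fin d) ℝ)) - Z := by module
    rwa [e] at h
  have hZA : (Z⁻¹ - A).PosSemidef := by
    rw [hA]
    exact auxInvAntitone hZpd hc hNZ
  have key1 : (Y⁻¹ - W * A * W).PosSemidef := by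
    have h := hZA.mul_mul_conjTranspose_same W
    rw [hWH.eq] at h
    have e : W * (Z⁻¹ - A) * W = Y⁻¹ - W * A * W := by
      rw [Matrix.mul_sub, Matrix.sub_mul, ← hYinv]
    rwa [e] at h
  -- part 1
  set K := Y⁻¹ ^ (p+1) with hK
  have hKpsd : K.PosSemidef := hYinvpd.posSemidef.pow (p+1)
  have htraceX : (X * K).trace = ∑ j, x j * (u j ⬝ᵥ K *ᵥ u j) := by
    rw [hXdef, Finset.sum_mul, trace_sum]
    apply Finset.sum_congr rfl
    intro i _
    rw [Matrix.smul_mul, trace_smul, auxTraceVecMulVec, smul_eq_mul]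
  have part1 : ∑ j ∈ Sᶜ.filter (fun j => u j ≠ 0), (x j / M) * (1 + α * (v j ⬝ᵥ A *ᵥ v j)) *
        ((u j ⬝ᵥ K *ᵥ u j) / (u j ⬝ᵥ Y⁻¹ *ᵥ u j)) *
        (1 - 1 / (1 + u j ⬝ᵥ Y⁻¹ *ᵥ u j) ^ p) ≤
      ((p : ℝ) * α / M) * (X * K).trace := by
    have hcoef : 0 ≤ (p:ℝ) * α / M := by positivity
    calc ∑ j ∈ Sᶜ.filter (fun j => u j ≠ 0), (x j / M) * (1 + α * (v j ⬝ᵥ A *ᵥ v j)) *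
        ((u j ⬝ᵥ K *ᵥ u j) / (u j ⬝ᵥ Y⁻¹ *ᵥ u j)) *
        (1 - 1 / (1 + u j ⬝ᵥ Y⁻¹ *ᵥ u j) ^ p)
        ≤ ∑ j ∈ Sᶜ.filter (fun j => u j ≠ 0),
          ((p:ℝ) * α / M) * (x j * (u j ⬝ᵥ K *ᵥ u j)) := by
          apply Finset.sum_le_sum
          intro j hj
          obtain ⟨hjc, hju⟩ := Finset.mem_filter.mp hj
          set t := u j ⬝ᵥ Y⁻¹ *ᵥ u j with htj
          set r := u j ⬝ᵥ K *ᵥ u j with hrj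
          set s := v j ⬝ᵥ A *ᵥ v j with hsj
          have htpos : 0 < t := by
            have := hYinvpd.dotProduct_mulVec_pos hju
            simpa using this
          have hrnn : 0 ≤ r := auxQuadNonneg hKpsd (u j)
          have hs_le : s ≤ t := by
            have h1 := auxQuadNonneg key1 (u j)
            have h2 : (u j) ⬝ᵥ (Y⁻¹ - W * A * W) *ᵥ (u j) = t - s := by
              rw [sub_mulVec, dotProduct_sub, auxConjQuad hWH (u j), hsj, hv j]
            linarith [h2 ▸ h1]
          have hsnn : 0 ≤ s := auxQuadNonneg hApd.posSemidef (v j)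
          have hqnn : 0 ≤ 1 - 1/(1+t)^p := by
            have hone : (1:ℝ) ≤ (1+t)^p := one_le_pow₀ (by linarith)
            have : 1/(1+t)^p ≤ 1 := by
              rw [div_le_one (by linarith)]
              exact hone
            linarith
          have hxj := hx j
          have hsc : (1 + α*s) * (1 - 1/(1+t)^p) ≤ (p:ℝ) * α * t := by
            have h1 : (1+α*s) ≤ (1+α*t) := by nlinarith [hαpos, hs_le]
            calc (1+α*s)*(1-1/(1+t)^p) ≤ (1+α*t)*(1-1/(1+t)^p) :=
                  mul_le_mul_of_nonneg_right h1 hqnn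
            _ ≤ (p:ℝ)*α*t := auxScalar p hp α t hα1 htpos
          have hnn2 : 0 ≤ (x j / M) * (r / t) :=
            mul_nonneg (div_nonneg hxj.1 hM.le) (div_nonneg hrnn htpos.le)
          calc (x j / M) * (1 + α*s) * (r/t) * (1-1/(1+t)^p)
              = ((x j / M) * (r/t)) * ((1+α*s)*(1-1/(1+t)^p)) := by ring
          _ ≤ ((x j / M) * (r/t)) * ((p:ℝ)*α*t) := mul_le_mul_of_nonneg_left hsc hnn2
          _ = ((x j)/M) * ((p:ℝ)*α) * (r/t*t) := by ring
          _ = ((p:ℝ)*α/M) * (x j * r) := by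
                rw [div_mul_cancel₀ r htpos.ne']
                ring
    _ ≤ ∑ j, ((p:ℝ) * α / M) * (x j * (u j ⬝ᵥ K *ᵥ u j)) := by
          apply Finset.sum_le_sum_of_subset_of_nonneg (Finset.subset_univ _)
          intro j _ _
          exact mul_nonneg hcoef (mul_nonneg (hx j).1 (auxQuadNonneg hKpsd (u j)))
    _ = ((p:ℝ) * α / M) * (X * K).trace := by
          rw [htraceX, Finset.mul_sum]
  -- part 2
  have hYβX : (Y - β • X).PosSemidef := by
    have h := hZβ.mul_mul_conjTranspose_same W⁻¹
    rw [hWinvH.eq] at h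
    have hWinv2 : W⁻¹ * W⁻¹ = X := by
      rw [← Matrix.mul_inv_rev, hW2, Matrix.nonsing_inv_nonsing_inv _ hXdet]
    have e : W⁻¹ * (Z - β • (1 : Matrix (Fin d) (Fin d) ℝ)) * W⁻¹ = Y - β • X := by
      rw [Matrix.mul_sub, Matrix.sub_mul, ← hYeq]
      congr 1
      rw [Matrix.mul_smul, Matrix.mul_one, Matrix.smul_mul, hWinv2]
    rwa [e] at h
  have hβXpd : (β • X).PosDef := by
    refine PosDef.of_dotProduct_mulVec_pos ?_ ?_
    · have : (β • X)ᴴ = β • Xᴴ := by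
        rw [conjTranspose_smul, star_trivial]
      rw [Matrix.IsHermitian, this, hX.1.eq]
    · intro y hy
      have := hX.dotProduct_mulVec_pos hy
      simp only [smul_mulVec, dotProduct_smul, smul_eq_mul] at *
      exact mul_pos hβpos this
  have hinvβX : (β • X)⁻¹ = β⁻¹ • X⁻¹ := by
    apply inv_eq_right_inv
    rw [Matrix.smul_mul, Matrix.mul_smul, smul_smul, mul_inv_cancel₀ hβpos.ne',
      Matrix.mul_nonsing_inv _ hXdet, one_smul]
  have hCB : (β⁻¹ • X⁻¹ - Y⁻¹).PosSemidef := by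
    have h := auxInvAntitone hβXpd hYpd hYβX
    rwa [hinvβX] at h
  have hCpsd : (β⁻¹ • X⁻¹).PosSemidef := by
    refine PosSemidef.of_dotProduct_mulVec_nonneg ?_ ?_
    · have : (β⁻¹ • X⁻¹)ᴴ = β⁻¹ • (X⁻¹)ᴴ := by
        rw [conjTranspose_smul, star_trivial]
      rw [Matrix.IsHermitian, this, hX.1.inv.eq]
    · intro y
      have := hX.posSemidef.inv.dotProduct_mulVec_nonneg y
      simp only [smul_mulVec, dotProduct_smul, smul_eq_mul] at *
      exact mul_nonneg (by positivity) this
  have hTPM := auxTracePowMono hYinvpd.posSemidef hCpsd hCB p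
  have hCp : ((β⁻¹ • X⁻¹)^p).trace = β⁻¹^p * ((X⁻¹)^p).trace := by
    rw [smul_pow, trace_smul, smul_eq_mul]
  have hYK : (Y * K).trace = ((Y⁻¹)^p).trace := by
    rw [hK, pow_succ', ← Matrix.mul_assoc, Matrix.mul_nonsing_inv _ hYdet, Matrix.one_mul]
  have htr1 : β * (X * K).trace ≤ ((Y⁻¹)^p).trace := by
    have h := auxTraceMulNonneg hYβX hKpsd
    rw [Matrix.sub_mul, trace_sub, Matrix.smul_mul, trace_smul, smul_eq_mul] at h
    rw [← hYK]
    linarith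
  have hβppos : (0:ℝ) < β^p := pow_pos hβpos p
  have hβp1pos : (0:ℝ) < β^(p+1) := pow_pos hβpos (p+1)
  have hchain : β^(p+1) * (X * K).trace ≤ ((X⁻¹)^p).trace := by
    have h1 : β^(p+1) * (X * K).trace = β^p * (β * (X * K).trace) := by
      rw [pow_succ]; ring
    have h2 : β^p * (β * (X * K).trace) ≤ β^p * ((Y⁻¹)^p).trace :=
      mul_le_mul_of_nonneg_left htr1 hβppos.le
    have h3 : β^p * ((Y⁻¹)^p).trace ≤ β^p * (β⁻¹^p * ((X⁻¹)^p).trace) := by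
      apply mul_le_mul_of_nonneg_left _ hβppos.le
      rw [← hCp]
      exact hTPM
    have h4 : β^p * (β⁻¹^p * ((X⁻¹)^p).trace) = ((X⁻¹)^p).trace := by
      rw [← mul_assoc, ← mul_pow, mul_inv_cancel₀ hβpos.ne', one_pow, one_mul]
    calc β^(p+1) * (X * K).trace = β^p * (β * (X * K).trace) := h1
    _ ≤ β^p * ((Y⁻¹)^p).trace := h2
    _ ≤ β^p * (β⁻¹^p * ((X⁻¹)^p).trace) := h3
    _ = ((X⁻¹)^p).trace := h4
  have part2 : ((p : ℝ) * α / M) * (X * K).trace ≤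
      ((p : ℝ) * α / (β ^ (p + 1) * M)) * ((X⁻¹) ^ p).trace := by
    have he : ((p : ℝ) * α / M) * (X * K).trace
        = ((p : ℝ) * α / (β ^ (p + 1) * M)) * (β^(p+1) * (X * K).trace) := by
      field_simp
    rw [he]
    apply mul_le_mul_of_nonneg_left hchain (by positivity)
  exact ⟨part1, part2⟩
end
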